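/- arXiv:2511.08701 — 7 statements merged into one kernel-verified Lean document; each statement's English description precedes it below -/
import Mathlib

section
/- Let 0 < α < 1 and μ ∈ (πα/2, πα). Then the set {z ∈ ℂ \ {0} : μ ≤ |arg(−i z^α)| ≤ π} coincides with the sector Σ = {z ∈ ℂ \ {0} : max(−π, (μ − 3π/2)/α) ≤ arg z ≤ min(π, (π/2 − μ)/α)}. -/
open Complex Real

lemma neg_I_cpow_eq (a : ℝ) (z : ℂ) (hz : z ≠ 0) :
    -Complex.I * z ^ (a : ℂ) =
      ((‖z‖ ^ a : ℝ) : ℂ) *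
        Complex.exp (((a * Complex.arg z - Real.pi / 2 : ℝ) : ℂ) * Complex.I) := by
  have habs : (0:ℝ) < ‖z‖ := norm_pos_iff.mpr hz
  rw [Complex.cpow_def_of_ne_zero hz]
  have hlog : Complex.log z = (Real.log (‖z‖) : ℂ) + (Complex.arg z : ℝ) * Complex.I :=
    rfl
  rw [hlog]
  have h1 : Complex.exp ((↑(Real.log (‖z‖)) + ↑(Complex.arg z) * Complex.I) * ↑a)
      = Complex.exp ((a * Real.log (‖z‖) : ℝ)) *
        Complex.exp (((a * Complex.arg z : ℝ) : ℂ) * Complex.I) := by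
    rw [← Complex.exp_add]; push_cast; ring_nf
  rw [h1]
  have h2 : ((‖z‖ ^ a : ℝ) : ℂ) = Complex.exp ((a * Real.log (‖z‖) : ℝ)) := by
    rw [Real.rpow_def_of_pos habs, Complex.ofReal_exp, mul_comm]
  have h3 : Complex.exp (((a * Complex.arg z - Real.pi / 2 : ℝ) : ℂ) * Complex.I)
      = Complex.exp (((a * Complex.arg z : ℝ) : ℂ) * Complex.I) *
        Complex.exp (((-(Real.pi / 2) : ℝ) : ℂ) * Complex.I) := by
    rw [← Complex.exp_add]; push_cast; ring_nf
  have h4 : Complex.exp (((-(Real.pi / 2) : ℝ) : ℂ) * Complex.I) = -Complex.I := by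
    push_cast
    rw [Complex.exp_mul_I, Complex.cos_neg, Complex.sin_neg]
    have : (↑Real.pi / 2 : ℂ) = ((Real.pi / 2 : ℝ) : ℂ) := by push_cast; ring
    rw [this, ← Complex.ofReal_cos, ← Complex.ofReal_sin, Real.cos_pi_div_two,
      Real.sin_pi_div_two]
    simp
  rw [h2, h3, h4]
  ring

/-- For `0 < α < 1` and `μ ∈ (πα/2, πα)`, the set
`{z ≠ 0 : μ ≤ |arg(−i z^α)| ≤ π}` coincides with the sector
`Σ = {z ≠ 0 : max(−π, (μ − 3π/2)/α) ≤ arg z ≤ min(π, (π/2 − μ)/α)}`. -/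
theorem sector_eq (a : ℝ) (ha0 : 0 < a) (ha1 : a < 1)
    (mu : ℝ) (hmu1 : Real.pi * a / 2 < mu) (hmu2 : mu < Real.pi * a) :
    {z : ℂ | z ≠ 0 ∧ mu ≤ |Complex.arg (-Complex.I * z ^ (a : ℂ))| ∧
        |Complex.arg (-Complex.I * z ^ (a : ℂ))| ≤ Real.pi} =
      {z : ℂ | z ≠ 0 ∧ max (-Real.pi) ((mu - 3 * Real.pi / 2) / a) ≤ Complex.arg z ∧
        Complex.arg z ≤ min Real.pi ((Real.pi / 2 - mu) / a)} := by
  have hpi : (0:ℝ) < Real.pi := Real.pi_pos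
  have hpa : Real.pi * a < Real.pi := by nlinarith
  ext z
  simp only [Set.mem_setOf_eq]
  refine and_congr_right fun hz => ?_
  set θ := Complex.arg z with hθdef
  have hθ1 : -Real.pi < θ := Complex.neg_pi_lt_arg z
  have hθ2 : θ ≤ Real.pi := Complex.arg_le_pi z
  have ht1 : -(Real.pi * a) < a * θ := by nlinarith
  have ht2 : a * θ ≤ Real.pi * a := by nlinarith
  have hcomm : θ * a = a * θ := mul_comm θ a
  have harg : Complex.arg (-Complex.I * z ^ (a : ℂ)) =
      toIocMod (mul_pos two_pos Real.pi_pos) (-Real.pi) (a * θ - Real.pi / 2) := by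
    rw [neg_I_cpow_eq a z hz, Complex.arg_real_mul _ (Real.rpow_pos_of_pos (norm_pos_iff.mpr hz) a),
      Complex.arg_exp_mul_I]
  rw [max_le_iff, le_min_iff, div_le_iff₀ ha0, le_div_iff₀ ha0, harg]
  by_cases hcase : -Real.pi < a * θ - Real.pi / 2
  · have hself : toIocMod (mul_pos two_pos Real.pi_pos) (-Real.pi) (a * θ - Real.pi / 2)
        = a * θ - Real.pi / 2 := by
      rw [toIocMod_eq_self]
      constructor
      · exact hcase
      · nlinarith
    rw [hself]
    rcases abs_cases (a * θ - Real.pi / 2) with ⟨he, hsgn⟩ | ⟨he, hsgn⟩ <;> rw [he]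
    · constructor
      · rintro ⟨h1, h2⟩
        exact ⟨⟨hθ1.le, by linarith⟩, hθ2, by linarith⟩
      · rintro ⟨⟨-, hb⟩, -, hc⟩
        constructor <;> linarith
    · constructor
      · rintro ⟨h1, h2⟩
        exact ⟨⟨hθ1.le, by linarith⟩, hθ2, by linarith⟩
      · rintro ⟨⟨-, hb⟩, -, hc⟩
        constructor <;> linarith
  · push_neg at hcase
    have hshift : toIocMod (mul_pos two_pos Real.pi_pos) (-Real.pi) (a * θ - Real.pi / 2)
        = a * θ - Real.pi / 2 + 2 * Real.pi := by
      rw [← toIocMod_add_right, toIocMod_eq_self]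
      constructor
      · nlinarith
      · nlinarith
    rw [hshift]
    have hpos : 0 ≤ a * θ - Real.pi / 2 + 2 * Real.pi := by nlinarith
    rw [_root_.abs_of_nonneg hpos]
    constructor
    · rintro ⟨h1, h2⟩
      exact ⟨⟨hθ1.le, by linarith⟩, hθ2, by linarith⟩
    · rintro ⟨⟨-, hb⟩, -, hc⟩
      constructor <;> linarith
end

section
/- Let 0 < α < 1, μ ∈ (πα/2, πα), and let C₀ > 0 be a constant such that |E_{α,1}(−i λ w^α)| ≤ C₀/(1 + λ|w|^α) for all λ ≥ 0 and all w ∈ ℂ \ {0} with μ ≤ |arg(−i w^α)| ≤ π. Let H be a complex Hilbert space, (φ_n)_{n∈ℕ} an orthonormal family in H, (λ_n)_{n∈ℕ} nonnegative reals, and (c_n)_{n∈ℕ} complex numbers with Σ_n |c_n|² < ∞. Then for every z in the sector Σ = {z ∈ ℂ \ {0} : max(−π, (μ − 3π/2)/α) ≤ arg z ≤ min(π, (π/2 − μ)/α)}, the series y(z) = Σ_{n=1}^∞ c_n E_{α,1}(−i λ_n z^α) φ_n converges in H and satisfies ‖y(z)‖_H ≤ C₀ (Σ_n |c_n|²)^{1/2};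 moreover, y is analytic on the open sector {z ∈ ℂ \ {0} : max(−π, (μ − 3π/2)/α) < arg z < min(π, (π/2 − μ)/α)}. -/
/-- The Mittag-Leffler function `E_{α,β}(w) = ∑_{k=0}^∞ w^k / Γ(αk + β)`. -/
noncomputable def mittagLeffler (a b : ℝ) (w : ℂ) : ℂ :=
  ∑' k : ℕ, w ^ k / (Real.Gamma (a * k + b) : ℂ)

open Complex Filter

lemma gamma_min : ∃ γ₀ > 0, ∀ x ∈ Set.Icc (1:ℝ) 2, γ₀ ≤ Real.Gamma x := by
  have hc : ContinuousOn Real.Gamma (Set.Icc 1 2) := fun x hx =>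
    (Real.differentiableAt_Gamma (fun m => by
      have : (0:ℝ) ≤ m := Nat.cast_nonneg m
      have := hx.1; intro h; rw [h] at this; linarith)).continuousAt.continuousWithinAt
  obtain ⟨x₀, hx₀, hmin⟩ := isCompact_Icc.exists_isMinOn (Set.nonempty_Icc.2 one_le_two) hc
  exact ⟨Real.Gamma x₀, Real.Gamma_pos_of_pos (by linarith [hx₀.1]),
    fun x hx => isMinOn_iff.mp hmin x hx⟩

lemma gamma_fact {γ₀ : ℝ} (hγ0 : 0 < γ₀)
    (hγ : ∀ x ∈ Set.Icc (1:ℝ) 2, γ₀ ≤ Real.Gamma x) :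
    ∀ m : ℕ, ∀ r ∈ Set.Icc (1:ℝ) 2, γ₀ * (Nat.factorial m : ℝ) ≤ Real.Gamma (r + m) := by
  intro m
  induction m with
  | zero => intro r hr; simpa using hγ r hr
  | succ m ih =>
      intro r hr
      have hrm : (0:ℝ) < r + m := by
        have := hr.1; have : (0:ℝ) ≤ m := Nat.cast_nonneg m; linarith [hr.1]
      have h1 : Real.Gamma (r + (m+1:ℕ)) = (r + m) * Real.Gamma (r + m) := by
        have : (r + (m+1:ℕ) : ℝ) = (r + m) + 1 := by push_cast; ring
        rw [this, Real.Gamma_add_one (ne_of_gt hrm)]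
      have h2 := ih r hr
      have h3 : (m:ℝ) + 1 ≤ r + m := by linarith [hr.1]
      have hΓ : 0 ≤ Real.Gamma (r + m) := (Real.Gamma_pos_of_pos hrm).le
      rw [h1]
      calc γ₀ * (Nat.factorial (m+1) : ℝ) = ((m:ℝ) + 1) * (γ₀ * (Nat.factorial m : ℝ)) := by
            push_cast [Nat.factorial_succ]; ring
        _ ≤ (r + m) * Real.Gamma (r + m) := by
            apply mul_le_mul h3 h2 (by positivity) (by linarith)

lemma summable_aux (a : ℝ) (ha : 0 < a) (R : ℝ) (hR : 0 ≤ R) :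
    Summable (fun k : ℕ => R ^ k / Real.Gamma (a * k + 1)) := by
  obtain ⟨γ₀, hγ0, hγ⟩ := gamma_min
  set x : ℝ := (2 * R + 1) ^ (1 / a) with hxdef
  have hx1 : (1:ℝ) ≤ x := Real.one_le_rpow (by linarith) (by positivity)
  have hx0 : (0:ℝ) < x := by linarith
  have hxa : x ^ a = 2 * R + 1 := by
    rw [hxdef, ← Real.rpow_mul (by linarith), one_div_mul_cancel (ne_of_gt ha), Real.rpow_one]
  have key : ∀ k : ℕ, R ^ k / Real.Gamma (a * k + 1) ≤ (x * Real.exp x / γ₀) * (1/2) ^ k := by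
    intro k
    set m : ℕ := Nat.floor (a * k) with hmdef
    have hak : (0:ℝ) ≤ a * k := by positivity
    have hm1 : (m:ℝ) ≤ a * k := Nat.floor_le hak
    have hm2 : a * k < m + 1 := Nat.lt_floor_add_one _
    have hr : a * k + 1 - m ∈ Set.Icc (1:ℝ) 2 := by
      constructor <;> [linarith; linarith]
    have hΓ : γ₀ * (Nat.factorial m : ℝ) ≤ Real.Gamma (a * k + 1) := by
      have := gamma_fact hγ0 hγ m _ hr
      have he : (a * k + 1 - m) + m = a * k + 1 := by ring
      rwa [he] at this
    have hΓpos : 0 < Real.Gamma (a * k + 1) := Real.Gamma_pos_of_pos (by positivity)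
    -- (2R+1)^k ≤ x * exp x * m!
    have hxm : x ^ (m:ℝ) / (Nat.factorial m : ℝ) ≤ Real.exp x := by
      have h1 : x ^ (m:ℝ) = x ^ m := Real.rpow_natCast x m
      have h2 : x ^ m / (Nat.factorial m : ℝ) ≤ ∑ i ∈ Finset.range (m+1), x ^ i / (Nat.factorial i : ℝ) := by
        apply Finset.single_le_sum (f := fun i => x ^ i / (Nat.factorial i : ℝ))
          (fun i _ => by positivity) (Finset.self_mem_range_succ m)
      calc x ^ (m:ℝ) / (Nat.factorial m : ℝ) = x ^ m / (Nat.factorial m : ℝ) := by rw [h1]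
        _ ≤ _ := h2
        _ ≤ Real.exp x := Real.sum_le_exp_of_nonneg (by linarith) _
    have hpow : (2 * R + 1) ^ k ≤ x * (Real.exp x * (Nat.factorial m : ℝ)) := by
      have h1 : ((2 * R + 1) ^ k : ℝ) = x ^ (a * k) := by
        rw [← hxa, ← Real.rpow_natCast (x ^ a) k, ← Real.rpow_mul (le_of_lt hx0)]
      have h2 : x ^ (a * (k:ℝ)) ≤ x ^ ((m:ℝ) + 1) :=
        Real.rpow_le_rpow_of_exponent_le hx1 (by linarith)
      have h3 : x ^ ((m:ℝ) + 1) = x ^ (m:ℝ) * x := by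
        rw [Real.rpow_add hx0, Real.rpow_one]
      have h4 : x ^ (m:ℝ) ≤ Real.exp x * (Nat.factorial m : ℝ) := by
        rw [div_le_iff₀ (by positivity : (0:ℝ) < (Nat.factorial m : ℝ))] at hxm
        exact hxm
      calc ((2 * R + 1) ^ k : ℝ) = x ^ (a * (k:ℝ)) := h1
        _ ≤ x ^ (m:ℝ) * x := by rw [← h3]; exact h2
        _ ≤ (Real.exp x * (Nat.factorial m : ℝ)) * x := by
            apply mul_le_mul_of_nonneg_right h4 (le_of_lt hx0)
        _ = x * (Real.exp x * (Nat.factorial m : ℝ)) := by ring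
    -- now combine
    rw [div_le_iff₀ hΓpos]
    have hRk : R ^ k ≤ (1/2) ^ k * (2 * R + 1) ^ k := by
      have : R ^ k ≤ ((2 * R + 1)/2) ^ k := pow_le_pow_left₀ hR (by linarith) k
      calc R ^ k ≤ ((2 * R + 1)/2) ^ k := this
        _ = (1/2) ^ k * (2 * R + 1) ^ k := by rw [← mul_pow]; ring_nf
    have hfin : (1/2:ℝ) ^ k * (2 * R + 1) ^ k ≤
        x * Real.exp x / γ₀ * (1/2) ^ k * Real.Gamma (a * k + 1) := by
      have htp : (0:ℝ) ≤ (1/2:ℝ) ^ k := by positivity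
      have h5 : (2 * R + 1) ^ k ≤ x * Real.exp x / γ₀ * Real.Gamma (a * k + 1) := by
        have h6 : x * Real.exp x * (Nat.factorial m : ℝ) ≤
            x * Real.exp x / γ₀ * Real.Gamma (a * k + 1) := by
          rw [div_mul_eq_mul_div, le_div_iff₀ hγ0]
          calc x * Real.exp x * (Nat.factorial m : ℝ) * γ₀ = (x * Real.exp x) * (γ₀ * (Nat.factorial m : ℝ)) := by ring
            _ ≤ (x * Real.exp x) * Real.Gamma (a * k + 1) := by
                apply mul_le_mul_of_nonneg_left hΓ (by positivity)
            _ = x * Real.exp x * Real.Gamma (a * k + 1) := by ring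
        calc ((2 * R + 1) ^ k : ℝ) ≤ x * (Real.exp x * (Nat.factorial m : ℝ)) := hpow
          _ = x * Real.exp x * (Nat.factorial m : ℝ) := by ring
          _ ≤ _ := h6
      calc (1/2:ℝ) ^ k * (2 * R + 1) ^ k
          ≤ (1/2:ℝ) ^ k * (x * Real.exp x / γ₀ * Real.Gamma (a * k + 1)) :=
            mul_le_mul_of_nonneg_left h5 htp
        _ = x * Real.exp x / γ₀ * (1/2) ^ k * Real.Gamma (a * k + 1) := by ring
    linarith
  apply Summable.of_nonneg_of_le (fun k => by positivity) key
  exact (summable_geometric_of_lt_one (by norm_num) (by norm_num)).mul_left _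


lemma ml_differentiable (a : ℝ) (ha : 0 < a) (w : ℂ) :
    DifferentiableAt ℂ (mittagLeffler a 1) w := by
  set R : ℝ := ‖w‖ + 1 with hR
  have hdiff : DifferentiableOn ℂ (mittagLeffler a 1) (Metric.ball 0 R) := by
    have h := tendstoUniformlyOn_tsum (f := fun (k : ℕ) (z : ℂ) =>
        z ^ k / (Real.Gamma (a * k + 1) : ℂ)) (summable_aux a ha R (by positivity))
        (s := Metric.ball (0:ℂ) R) ?_
    · have := h.tendstoLocallyUniformlyOn.differentiableOn
        (Filter.Eventually.of_forall (fun t : Finset ℕ => ?_)) Metric.isOpen_ball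
      · exact this
      · exact DifferentiableOn.fun_sum (fun k _ =>
          ((differentiable_pow k).differentiableOn).div_const _)
    · intro k z hz
      have hΓ : 0 < Real.Gamma (a * k + 1) := Real.Gamma_pos_of_pos (by positivity)
      have hz' : ‖z‖ ≤ R := by
        have := Metric.mem_ball.mp hz
        simp only [dist_zero_right] at this
        exact le_of_lt (by simpa using this)
      rw [norm_div, norm_pow]
      have h1 : ‖(Real.Gamma (a * k + 1) : ℂ)‖ = Real.Gamma (a * k + 1) := by
        rw [Complex.norm_real, Real.norm_of_nonneg hΓ.le]
      rw [h1]
      gcongr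
  exact hdiff.differentiableAt (Metric.isOpen_ball.mem_nhds (by
    simp [hR, Metric.mem_ball, dist_zero_right]))

lemma orthonormal_tsum {ι : Type*} {H : Type*} [NormedAddCommGroup H]
    [InnerProductSpace ℂ H] [CompleteSpace H] {φ : ι → H} (hφ : Orthonormal ℂ φ)
    {b : ι → ℂ} (hb : Summable fun n => ‖b n‖ ^ 2) :
    Summable (fun n => b n • φ n) ∧
      ‖∑' n, b n • φ n‖ ≤ Real.sqrt (∑' n, ‖b n‖ ^ 2) := by
  classical
  have hnorm : ∀ s : Finset ι, ‖∑ i ∈ s, b i • φ i‖ ^ 2 = ∑ i ∈ s, ‖b i‖ ^ 2 := by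
    intro s
    have h := hφ.inner_sum b b s
    have h2 : (‖∑ i ∈ s, b i • φ i‖ : ℝ) ^ 2 =
        RCLike.re (inner (𝕜 := ℂ) (∑ i ∈ s, b i • φ i) (∑ i ∈ s, b i • φ i)) := by
      rw [← @inner_self_eq_norm_sq ℂ]
    rw [h2, h]
    rw [map_sum]
    congr 1
    funext i
    rw [mul_comm, Complex.mul_conj]
    simp [Complex.normSq_eq_norm_sq, ← Complex.ofReal_pow]
  have hsummable : Summable (fun n => b n • φ n) := by
    rw [summable_iff_vanishing]
    intro e he
    obtain ⟨ε, hε, hball⟩ := Metric.mem_nhds_iff.mp he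
    obtain ⟨s, hs⟩ := hb.vanishing (Metric.ball_mem_nhds (0:ℝ) (by positivity : 0 < ε^2))
    refine ⟨s, fun t ht => hball ?_⟩
    have h1 := hs t ht
    simp only [Metric.mem_ball, dist_zero_right, Real.norm_eq_abs] at h1 ⊢
    have h2 : ∑ i ∈ t, ‖b i‖ ^ 2 < ε ^ 2 := lt_of_abs_lt h1
    have h3 : ‖∑ i ∈ t, b i • φ i‖ ^ 2 < ε ^ 2 := by rw [hnorm]; exact h2
    have h4 : (0:ℝ) ≤ ‖∑ i ∈ t, b i • φ i‖ := norm_nonneg _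
    nlinarith
  refine ⟨hsummable, ?_⟩
  have hle : ∀ s : Finset ι, ‖∑ i ∈ s, b i • φ i‖ ≤ Real.sqrt (∑' n, ‖b n‖ ^ 2) := by
    intro s
    rw [← Real.sqrt_sq (norm_nonneg (∑ i ∈ s, b i • φ i)), hnorm]
    exact Real.sqrt_le_sqrt (Summable.sum_le_tsum s (fun i _ => by positivity) hb)
  have htend : Tendsto (fun s : Finset ι => ‖∑ i ∈ s, b i • φ i‖) atTop
      (nhds ‖∑' n, b n • φ n‖) :=
    (continuous_norm.continuousAt).tendsto.comp hsummable.hasSum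
  exact le_of_tendsto htend (Filter.Eventually.of_forall hle)


lemma neg_I_cpow (a : ℝ) (z : ℂ) (hz : z ≠ 0) :
    -Complex.I * z ^ (a:ℂ) =
      (Real.exp (a * Real.log ‖z‖) : ℂ) *
        Complex.exp ((↑(a * Complex.arg z - Real.pi/2) : ℂ) * Complex.I) := by
  have hI : -Complex.I = Complex.exp (((-(Real.pi/2) : ℝ) : ℂ) * Complex.I) := by
    rw [Complex.exp_mul_I, ← Complex.ofReal_cos, ← Complex.ofReal_sin]
    simp [Real.cos_pi_div_two, Real.sin_pi_div_two]
  have hlog : Complex.log z =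
      (Real.log ‖z‖ : ℂ) + (Complex.arg z : ℂ) * Complex.I := rfl
  rw [Complex.cpow_def_of_ne_zero hz, hI, ← Complex.exp_add, Complex.ofReal_exp,
    ← Complex.exp_add]
  congr 1
  rw [hlog]
  push_cast
  ring

lemma arg_exp_eq {ψ : ℝ} (h1 : -Real.pi < ψ) (h2 : ψ ≤ Real.pi) :
    Complex.arg (Complex.exp ((ψ:ℂ) * Complex.I)) = ψ := by
  rw [Complex.exp_mul_I]
  exact Complex.arg_cos_add_sin_mul_I ⟨h1, h2⟩

lemma exp_shift (ψ : ℝ) :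
    Complex.exp ((ψ:ℂ) * Complex.I) = Complex.exp ((↑(ψ + 2*Real.pi) : ℂ) * Complex.I) := by
  push_cast
  rw [add_mul, Complex.exp_add]
  have : Complex.exp ((2*Real.pi : ℝ) * Complex.I) = 1 := by
    rw [Complex.exp_mul_I, ← Complex.ofReal_cos, ← Complex.ofReal_sin]
    simp [Real.cos_two_pi, Real.sin_two_pi]
  rw [show ((2:ℂ) * ↑Real.pi * Complex.I) = ((2*Real.pi : ℝ) : ℂ) * Complex.I by push_cast; ring,
    this, mul_one]

lemma arg_aux (a mu : ℝ) (ha0 : 0 < a) (ha1 : a < 1)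
    (hmu1 : Real.pi * a / 2 < mu) (hmu2 : mu < Real.pi * a)
    (z : ℂ) (hz : z ≠ 0)
    (h1 : max (-Real.pi) ((mu - 3 * Real.pi / 2) / a) ≤ Complex.arg z)
    (h2 : Complex.arg z ≤ min Real.pi ((Real.pi / 2 - mu) / a)) :
    mu ≤ |Complex.arg (-Complex.I * z ^ (a:ℂ))| ∧
      |Complex.arg (-Complex.I * z ^ (a:ℂ))| ≤ Real.pi := by
  have hπ : 0 < Real.pi := Real.pi_pos
  have hmu0 : 0 < mu := lt_trans (by positivity) hmu1
  have hmuπ : mu < Real.pi := lt_trans hmu2 (by nlinarith)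
  set θ := Complex.arg z with hθ
  have hθ1 : (mu - 3 * Real.pi / 2) / a ≤ θ := le_trans (le_max_right _ _) h1
  have hθ2 : θ ≤ (Real.pi / 2 - mu) / a := le_trans h2 (min_le_right _ _)
  have ha1' : a * θ ≤ Real.pi / 2 - mu := by
    rw [div_le_iff₀ ha0] at *
    nlinarith [(le_div_iff₀ ha0).mp hθ2]
  have ha2' : mu - 3 * Real.pi / 2 ≤ a * θ := by
    nlinarith [(div_le_iff₀ ha0).mp hθ1]
  set ψ := a * θ - Real.pi / 2 with hψ
  have hψ1 : ψ ≤ -mu := by simp only [hψ]; linarith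
  have hψ2 : mu - 2 * Real.pi ≤ ψ := by simp only [hψ]; linarith
  have habs : |Complex.arg (-Complex.I * z ^ (a:ℂ))| ≤ Real.pi := Complex.abs_arg_le_pi _
  refine ⟨?_, habs⟩
  have hrepr := neg_I_cpow a z hz
  have hrpos : (0:ℝ) < Real.exp (a * Real.log ‖z‖) := Real.exp_pos _
  have hargmul : Complex.arg (-Complex.I * z ^ (a:ℂ)) =
      Complex.arg (Complex.exp ((↑ψ : ℂ) * Complex.I)) := by
    rw [hrepr, Complex.arg_real_mul _ hrpos]
  by_cases hcase : -Real.pi < ψ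
  · have harg : Complex.arg (-Complex.I * z ^ (a:ℂ)) = ψ := by
      rw [hargmul, arg_exp_eq hcase (by linarith)]
    rw [harg, abs_of_neg (by linarith : ψ < 0)]
    linarith
  · push_neg at hcase
    have harg : Complex.arg (-Complex.I * z ^ (a:ℂ)) = ψ + 2 * Real.pi := by
      rw [hargmul, exp_shift ψ, arg_exp_eq (by linarith) (by linarith)]
    rw [harg, abs_of_pos (by linarith : 0 < ψ + 2 * Real.pi)]
    linarith


lemma sector_open (L U : ℝ) (hU : U ≤ Real.pi) :
    IsOpen {z : ℂ | z ≠ 0 ∧ L < Complex.arg z ∧ Complex.arg z < U} := by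
  rw [isOpen_iff_mem_nhds]
  rintro z ⟨hz0, hzL, hzU⟩
  have hslit : z ∈ Complex.slitPlane := by
    rw [Complex.mem_slitPlane_iff_arg]
    exact ⟨by intro h; rw [h] at hzU; linarith, hz0⟩
  have hc : ContinuousAt Complex.arg z := Complex.continuousAt_arg hslit
  have h1 : ∀ᶠ w in nhds z, Complex.arg w ∈ Set.Ioo L U :=
    hc.eventually_mem (isOpen_Ioo.mem_nhds ⟨hzL, hzU⟩)
  have h2 : ∀ᶠ w in nhds z, w ≠ 0 := eventually_ne_nhds hz0
  filter_upwards [h1, h2] with w hw1 hw2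
  exact ⟨hw2, hw1.1, hw1.2⟩

/-- Given the Mittag-Leffler bound with constant `C₀`, an orthonormal family `(φ_n)` in a
complex Hilbert space, nonnegative reals `(λ_n)` and `ℓ²` coefficients `(c_n)`, the series
`y(z) = ∑ c_n E_{α,1}(−i λ_n z^α) φ_n` converges on the sector `Σ`, is bounded in norm by
`C₀ (∑ |c_n|²)^{1/2}` there, and is analytic on the open sector. -/
theorem series_converges_bounded_analytic
    {H : Type*} [NormedAddCommGroup H] [InnerProductSpace ℂ H] [CompleteSpace H]
    (a : ℝ) (ha0 : 0 < a) (ha1 : a < 1)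
    (mu : ℝ) (hmu1 : Real.pi * a / 2 < mu) (hmu2 : mu < Real.pi * a)
    (C₀ : ℝ) (hC₀ : 0 < C₀)
    (hbound : ∀ lam : ℝ, 0 ≤ lam → ∀ w : ℂ, w ≠ 0 →
      mu ≤ |Complex.arg (-Complex.I * w ^ (a : ℂ))| →
      |Complex.arg (-Complex.I * w ^ (a : ℂ))| ≤ Real.pi →
      ‖mittagLeffler a 1 (-Complex.I * (lam : ℂ) * w ^ (a : ℂ))‖
        ≤ C₀ / (1 + lam * ‖w‖ ^ a))
    (φ : ℕ → H) (hφ : Orthonormal ℂ φ)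
    (lam : ℕ → ℝ) (hlam : ∀ n, 0 ≤ lam n)
    (c : ℕ → ℂ) (hc : Summable fun n => ‖c n‖ ^ 2) :
    (∀ z ∈ {z : ℂ | z ≠ 0 ∧ max (-Real.pi) ((mu - 3 * Real.pi / 2) / a) ≤ Complex.arg z ∧
        Complex.arg z ≤ min Real.pi ((Real.pi / 2 - mu) / a)},
      Summable (fun n : ℕ =>
        (c n * mittagLeffler a 1 (-Complex.I * (lam n : ℂ) * z ^ (a : ℂ))) • φ n) ∧
      ‖∑' n : ℕ, (c n * mittagLeffler a 1 (-Complex.I * (lam n : ℂ) * z ^ (a : ℂ))) • φ n‖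
        ≤ C₀ * Real.sqrt (∑' n : ℕ, ‖c n‖ ^ 2)) ∧
    AnalyticOnNhd ℂ
      (fun z : ℂ =>
        ∑' n : ℕ, (c n * mittagLeffler a 1 (-Complex.I * (lam n : ℂ) * z ^ (a : ℂ))) • φ n)
      {z : ℂ | z ≠ 0 ∧ max (-Real.pi) ((mu - 3 * Real.pi / 2) / a) < Complex.arg z ∧
        Complex.arg z < min Real.pi ((Real.pi / 2 - mu) / a)} := by
  have hπ : 0 < Real.pi := Real.pi_pos
  set Sc := {z : ℂ | z ≠ 0 ∧ max (-Real.pi) ((mu - 3 * Real.pi / 2) / a) ≤ Complex.arg z ∧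
      Complex.arg z ≤ min Real.pi ((Real.pi / 2 - mu) / a)} with hScdef
  -- coefficient bound
  have hE : ∀ z ∈ Sc, ∀ n : ℕ,
      ‖mittagLeffler a 1 (-Complex.I * (lam n : ℂ) * z ^ (a:ℂ))‖ ≤ C₀ := by
    intro z hz n
    obtain ⟨hz0, hzl, hzu⟩ := hz
    obtain ⟨hA1, hA2⟩ := arg_aux a mu ha0 ha1 hmu1 hmu2 z hz0 hzl hzu
    refine le_trans (hbound (lam n) (hlam n) z hz0 hA1 hA2) ?_
    apply div_le_self (le_of_lt hC₀)
    have h0 : 0 ≤ lam n * ‖z‖ ^ a :=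
      mul_nonneg (hlam n) (Real.rpow_nonneg (norm_nonneg z) a)
    linarith
  have hptw : ∀ z ∈ Sc, ∀ n : ℕ,
      ‖c n * mittagLeffler a 1 (-Complex.I * (lam n : ℂ) * z ^ (a:ℂ))‖ ^ 2
        ≤ C₀ ^ 2 * ‖c n‖ ^ 2 := by
    intro z hz n
    rw [norm_mul, mul_pow]
    have h1 : ‖mittagLeffler a 1 (-Complex.I * (lam n : ℂ) * z ^ (a:ℂ))‖ ≤ C₀ := by
      exact hE z hz n
    have h2 : (0:ℝ) ≤ ‖mittagLeffler a 1 (-Complex.I * (lam n : ℂ) * z ^ (a:ℂ))‖ :=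
      norm_nonneg _
    have h3 : (0:ℝ) ≤ ‖c n‖ := norm_nonneg _
    have h4 : ‖mittagLeffler a 1 (-Complex.I * (lam n : ℂ) * z ^ (a:ℂ))‖ ^ 2 ≤ C₀ ^ 2 := by
      nlinarith
    calc ‖c n‖ ^ 2 * ‖mittagLeffler a 1 (-Complex.I * (lam n : ℂ) * z ^ (a:ℂ))‖ ^ 2
        ≤ ‖c n‖ ^ 2 * C₀ ^ 2 := mul_le_mul_of_nonneg_left h4 (by positivity)
      _ = C₀ ^ 2 * ‖c n‖ ^ 2 := by ring
  have hsumSq : ∀ z ∈ Sc, Summable (fun n : ℕ =>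
      ‖c n * mittagLeffler a 1 (-Complex.I * (lam n : ℂ) * z ^ (a:ℂ))‖ ^ 2) := by
    intro z hz
    exact Summable.of_nonneg_of_le (fun n => by positivity) (hptw z hz) (hc.mul_left _)
  have hpart1 : ∀ z ∈ Sc,
      Summable (fun n : ℕ =>
        (c n * mittagLeffler a 1 (-Complex.I * (lam n : ℂ) * z ^ (a : ℂ))) • φ n) ∧
      ‖∑' n : ℕ, (c n * mittagLeffler a 1 (-Complex.I * (lam n : ℂ) * z ^ (a : ℂ))) • φ n‖
        ≤ C₀ * Real.sqrt (∑' n : ℕ, ‖c n‖ ^ 2) := by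
    intro z hz
    obtain ⟨hs, hle⟩ := orthonormal_tsum hφ (hsumSq z hz)
    refine ⟨hs, le_trans hle ?_⟩
    have h2 : (∑' n : ℕ, ‖c n * mittagLeffler a 1 (-Complex.I * (lam n : ℂ) * z ^ (a:ℂ))‖ ^ 2)
        ≤ C₀ ^ 2 * ∑' n : ℕ, ‖c n‖ ^ 2 := by
      rw [← tsum_mul_left]
      exact Summable.tsum_le_tsum (hptw z hz) (hsumSq z hz) (hc.mul_left _)
    calc Real.sqrt (∑' n : ℕ,
          ‖c n * mittagLeffler a 1 (-Complex.I * (lam n : ℂ) * z ^ (a:ℂ))‖ ^ 2)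
        ≤ Real.sqrt (C₀ ^ 2 * ∑' n : ℕ, ‖c n‖ ^ 2) := Real.sqrt_le_sqrt h2
      _ = C₀ * Real.sqrt (∑' n : ℕ, ‖c n‖ ^ 2) := by
          rw [Real.sqrt_mul (sq_nonneg C₀), Real.sqrt_sq hC₀.le]
  refine ⟨hpart1, ?_⟩
  -- analyticity
  set So := {z : ℂ | z ≠ 0 ∧ max (-Real.pi) ((mu - 3 * Real.pi / 2) / a) < Complex.arg z ∧
      Complex.arg z < min Real.pi ((Real.pi / 2 - mu) / a)} with hSodef
  have hSopen : IsOpen So := sector_open _ _ (min_le_left _ _)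
  have hsub : So ⊆ Sc := by
    rintro z ⟨hz0, hzl, hzu⟩
    exact ⟨hz0, le_of_lt hzl, le_of_lt hzu⟩
  have huc : TendstoUniformlyOn (fun (t : Finset ℕ) (z : ℂ) => ∑ n ∈ t,
        (c n * mittagLeffler a 1 (-Complex.I * (lam n : ℂ) * z ^ (a : ℂ))) • φ n)
      (fun z : ℂ =>
        ∑' n : ℕ, (c n * mittagLeffler a 1 (-Complex.I * (lam n : ℂ) * z ^ (a : ℂ))) • φ n)
      atTop So := by
    rw [Metric.tendstoUniformlyOn_iff]
    intro ε hε
    have hδ : (0:ℝ) < (ε / (C₀ + 1)) ^ 2 := by positivity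
    have htail := tendsto_tsum_compl_atTop_zero (fun n : ℕ => ‖c n‖ ^ 2)
    filter_upwards [(tendsto_order.1 htail).2 _ hδ] with t ht z hzS
    have hzSc : z ∈ Sc := hsub hzS
    have hsumv := (hpart1 z hzSc).1
    rw [dist_eq_norm, ← Summable.sum_add_tsum_subtype_compl hsumv t, add_sub_cancel_left]
    have hφ' : Orthonormal ℂ (fun n : {x : ℕ // x ∉ t} => φ ↑n) :=
      hφ.comp _ Subtype.coe_injective
    have hsq' : Summable (fun n : {x : ℕ // x ∉ t} =>
        ‖c ↑n * mittagLeffler a 1 (-Complex.I * (lam ↑n : ℂ) * z ^ (a:ℂ))‖ ^ 2) :=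
      (hsumSq z hzSc).subtype _
    obtain ⟨_, hle'⟩ := orthonormal_tsum hφ' hsq'
    refine lt_of_le_of_lt hle' ?_
    have hcsub : Summable (fun n : {x : ℕ // x ∉ t} => C₀ ^ 2 * ‖c ↑n‖ ^ 2) :=
      (hc.mul_left (C₀ ^ 2)).subtype _
    have h2 : (∑' n : {x : ℕ // x ∉ t},
          ‖c ↑n * mittagLeffler a 1 (-Complex.I * (lam ↑n : ℂ) * z ^ (a:ℂ))‖ ^ 2)
        ≤ C₀ ^ 2 * ∑' n : {x : ℕ // x ∉ t}, ‖c ↑n‖ ^ 2 := by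
      rw [← tsum_mul_left]
      exact Summable.tsum_le_tsum (fun n => hptw z hzSc ↑n) hsq' hcsub
    have hT0 : (0:ℝ) ≤ ∑' n : {x : ℕ // x ∉ t}, ‖c ↑n‖ ^ 2 :=
      tsum_nonneg (fun n => by positivity)
    have hsqrt : Real.sqrt (∑' n : {x : ℕ // x ∉ t}, ‖c ↑n‖ ^ 2) < ε / (C₀ + 1) := by
      have := Real.sqrt_lt_sqrt hT0 ht
      rwa [Real.sqrt_sq (by positivity)] at this
    calc Real.sqrt (∑' n : {x : ℕ // x ∉ t},
          ‖c ↑n * mittagLeffler a 1 (-Complex.I * (lam ↑n : ℂ) * z ^ (a:ℂ))‖ ^ 2)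
        ≤ Real.sqrt (C₀ ^ 2 * ∑' n : {x : ℕ // x ∉ t}, ‖c ↑n‖ ^ 2) := Real.sqrt_le_sqrt h2
      _ = C₀ * Real.sqrt (∑' n : {x : ℕ // x ∉ t}, ‖c ↑n‖ ^ 2) := by
          rw [Real.sqrt_mul (sq_nonneg C₀), Real.sqrt_sq hC₀.le]
      _ < C₀ * (ε / (C₀ + 1)) := by
          exact mul_lt_mul_of_pos_left hsqrt hC₀
      _ < ε := by
          rw [mul_div_assoc']
          rw [div_lt_iff₀ (by linarith)]
          nlinarith
  have hdiffF : ∀ t : Finset ℕ, DifferentiableOn ℂ (fun z : ℂ => ∑ n ∈ t,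
      (c n * mittagLeffler a 1 (-Complex.I * (lam n : ℂ) * z ^ (a : ℂ))) • φ n) So := by
    intro t
    apply DifferentiableOn.fun_sum
    intro n _
    intro z hzS
    apply DifferentiableAt.differentiableWithinAt
    have hslit : z ∈ Complex.slitPlane := by
      rw [Complex.mem_slitPlane_iff_arg]
      refine ⟨?_, hzS.1⟩
      have h1 : Complex.arg z < Real.pi := lt_of_lt_of_le hzS.2.2 (min_le_left _ _)
      exact ne_of_lt h1
    have h1 : DifferentiableAt ℂ (fun w : ℂ => w ^ (a:ℂ)) z :=
      HasDerivAt.differentiableAt (HasStrictDerivAt.hasDerivAt (Complex.hasStrictDerivAt_cpow_const (c := (a:ℂ)) hslit))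
    have h2 : DifferentiableAt ℂ
        (fun w : ℂ => -Complex.I * (lam n : ℂ) * w ^ (a:ℂ)) z := h1.const_mul _
    have h3c : DifferentiableAt ℂ ((mittagLeffler a 1) ∘
        (fun w : ℂ => -Complex.I * (lam n : ℂ) * w ^ (a:ℂ))) z :=
      DifferentiableAt.comp z (ml_differentiable a ha0 _) h2
    have h3 : DifferentiableAt ℂ
        (fun w : ℂ => mittagLeffler a 1 (-Complex.I * (lam n : ℂ) * w ^ (a:ℂ))) z := h3c
    have h4 := (h3.const_mul (c n)).smul_const (φ n)
    exact h4
  have hdiff : DifferentiableOn ℂ (fun z : ℂ =>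
      ∑' n : ℕ, (c n * mittagLeffler a 1 (-Complex.I * (lam n : ℂ) * z ^ (a : ℂ))) • φ n) So :=
    (huc.tendstoLocallyUniformlyOn).differentiableOn
      (Filter.Eventually.of_forall hdiffF) hSopen
  exact hdiff.analyticOnNhd hSopen
end

section
/- Let H be a complex Hilbert space, let (u_k)_{k∈ℕ} be pairwise orthogonal vectors in H with Σ_k ‖u_k‖² < ∞, let (μ_k)_{k∈ℕ} be a strictly increasing sequence of real numbers tending to +∞, and let S(η) = Σ_{k=1}^∞ (η + i μ_k)^{−1} u_k for η ∈ ℂ \ {−i μ_k : k ∈ ℕ}. Fix ℓ ∈ ℕ and r > 0 such that |μ_k − μ_ℓ| > r for every k ≠ ℓ. Then the integral of S over the positively oriented circle of center −i μ_ℓ and radius r satisfies (1/(2πi)) ∮_{|η + i μ_ℓ| = r} S(η) dη = u_ℓ. -/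
open Complex Filter intervalIntegral Metric


lemma norm_sq_sum_of_pairwise_orth {H : Type*} [NormedAddCommGroup H] [InnerProductSpace ℂ H]
    (v : ℕ → H) (hv : Pairwise fun j k => inner ℂ (v j) (v k) = (0 : ℂ)) (s : Finset ℕ) :
    ‖∑ k ∈ s, v k‖ ^ 2 = ∑ k ∈ s, ‖v k‖ ^ 2 := by
  have key : (inner ℂ (∑ j ∈ s, v j) (∑ k ∈ s, v k) : ℂ) = ∑ k ∈ s, inner ℂ (v k) (v k) := by
    rw [sum_inner]
    refine Finset.sum_congr rfl fun j hj => ?_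
    rw [inner_sum]
    exact Finset.sum_eq_single_of_mem j hj fun k _ hkj => hv (Ne.symm hkj)
  simp only [inner_self_eq_norm_sq_to_K] at key
  have : ((‖∑ k ∈ s, v k‖ ^ 2 : ℝ) : ℂ) = ((∑ k ∈ s, ‖v k‖ ^ 2 : ℝ) : ℂ) := by
    push_cast; exact key
  exact_mod_cast this

lemma summable_of_pairwise_orth {H : Type*} [NormedAddCommGroup H] [InnerProductSpace ℂ H]
    [CompleteSpace H]
    (v : ℕ → H) (hv : Pairwise fun j k => inner ℂ (v j) (v k) = (0 : ℂ))
    (h : Summable fun k => ‖v k‖ ^ 2) : Summable v := by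
  rw [summable_iff_cauchySeq_finset, cauchySeq_finset_iff_vanishing_norm]
  intro ε hε
  obtain ⟨s, hs⟩ := summable_iff_vanishing_norm.mp h (ε ^ 2) (by positivity)
  refine ⟨s, fun t ht => ?_⟩
  have h1 : ‖∑ k ∈ t, v k‖ ^ 2 = ∑ k ∈ t, ‖v k‖ ^ 2 := norm_sq_sum_of_pairwise_orth v hv t
  have h3 : ∑ k ∈ t, ‖v k‖ ^ 2 < ε ^ 2 := lt_of_le_of_lt (le_abs_self _) (by simpa using hs t ht)
  exact lt_of_pow_lt_pow_left₀ 2 hε.le (by rw [h1]; exact h3)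

/-- Termwise contour integration: with `S(η) = ∑ (η + i μ_k)⁻¹ u_k` as above, integrating over
the positively oriented circle of center `−i μ_ℓ` and radius `r` (chosen so that no other pole
is on or inside it) recovers `u_ℓ`: `(1/(2πi)) ∮ S(η) dη = u_ℓ`. -/
theorem residue_recovers_component
    {H : Type*} [NormedAddCommGroup H] [InnerProductSpace ℂ H] [CompleteSpace H]
    (u : ℕ → H) (hu : Pairwise fun j k => inner ℂ (u j) (u k) = (0 : ℂ))
    (hsum : Summable fun k => ‖u k‖ ^ 2)
    (mu : ℕ → ℝ) (hmono : StrictMono mu) (htop : Filter.Tendsto mu Filter.atTop Filter.atTop)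
    (S : ℂ → H) (hS : ∀ η : ℂ, S η = ∑' k : ℕ, (η + Complex.I * mu k)⁻¹ • u k)
    (ℓ : ℕ) (r : ℝ) (hr : 0 < r) (hrl : ∀ k, k ≠ ℓ → r < |mu k - mu ℓ|) :
    (2 * Real.pi * Complex.I)⁻¹ • (∮ η in C(-Complex.I * mu ℓ, r), S η) = u ℓ := by
  set c : ℂ := -Complex.I * mu ℓ with hc
  set a : ℕ → ℂ → ℂ := fun k η => (η + Complex.I * mu k)⁻¹ with ha
  set d : ℕ → ℝ := fun k => if k = ℓ then r⁻¹ else (|mu k - mu ℓ| - r)⁻¹ with hd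
  -- key pointwise facts on the circle
  have hkey : ∀ k θ, circleMap c r θ + Complex.I * mu k ≠ 0 ∧
      ‖a k (circleMap c r θ)‖ ≤ d k := by
    intro k θ
    have hsub : circleMap c r θ + Complex.I * mu k
        = circleMap 0 r θ + Complex.I * ((mu k : ℂ) - mu ℓ) := by
      rw [← circleMap_sub_center c r θ, hc]; ring
    have habs0 : ‖circleMap 0 r θ‖ = r := by
      rw [norm_circleMap_zero, abs_of_pos hr]
    by_cases hkl : k = ℓ
    · subst hkl
      have heq : circleMap c r θ + Complex.I * mu k = circleMap 0 r θ := by rw [hsub]; ring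
      constructor
      · rw [heq]; intro h0; rw [h0] at habs0; simp at habs0; exact hr.ne' habs0.symm
      · simp only [ha, hd, if_pos rfl, heq, norm_inv, habs0, le_refl]
    · have hIm : ‖Complex.I * ((mu k : ℂ) - mu ℓ)‖ = |mu k - mu ℓ| := by
        rw [norm_mul, Complex.norm_I, one_mul, ← Complex.ofReal_sub, Complex.norm_real, Real.norm_eq_abs]
      have hlb : |mu k - mu ℓ| - r ≤ ‖circleMap c r θ + Complex.I * mu k‖ := by
        have h1 : ‖Complex.I * ((mu k : ℂ) - mu ℓ)‖
            - ‖-(circleMap 0 r θ)‖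
            ≤ ‖Complex.I * ((mu k : ℂ) - mu ℓ) - -(circleMap 0 r θ)‖ :=
          norm_sub_norm_le _ _
        rw [norm_neg, hIm, habs0,
          sub_neg_eq_add] at h1
        rw [hsub]
        exact h1.trans_eq (by ring_nf)
      have hpos : 0 < |mu k - mu ℓ| - r := sub_pos.mpr (hrl k hkl)
      have hne : circleMap c r θ + Complex.I * mu k ≠ 0 := by
        intro h0
        rw [h0] at hlb; simp at hlb; linarith
      refine ⟨hne, ?_⟩
      simp only [ha, hd, if_neg hkl, norm_inv]
      exact inv_anti₀ hpos hlb
  -- nonnegativity of d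
  have hd0 : ∀ k, 0 ≤ d k := by
    intro k
    by_cases hkl : k = ℓ
    · simp only [hd, if_pos hkl]; positivity
    · simp only [hd, if_neg hkl]; exact inv_nonneg.2 (sub_pos.mpr (hrl k hkl)).le
  -- uniform bound C on d
  obtain ⟨N, hN⟩ := Filter.eventually_atTop.mp (htop.eventually (eventually_ge_atTop (mu ℓ + r + 1)))
  set C : ℝ := (∑ k ∈ Finset.range N, d k) + 1 with hCdef
  have hC1 : (1:ℝ) ≤ C := le_add_of_nonneg_left (Finset.sum_nonneg fun k _ => hd0 k)
  have hC0 : (0:ℝ) < C := lt_of_lt_of_le one_pos hC1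
  have hdC : ∀ k, d k ≤ C := by
    intro k
    by_cases hkN : k < N
    · calc d k ≤ ∑ j ∈ Finset.range N, d j :=
            Finset.single_le_sum (fun j _ => hd0 j) (Finset.mem_range.mpr hkN)
        _ ≤ C := by rw [hCdef]; linarith
    · push_neg at hkN
      have hk : mu ℓ + r + 1 ≤ mu k := hN k hkN
      have hkl : k ≠ ℓ := by
        intro h; rw [h] at hk; linarith
      have h1 : 1 ≤ |mu k - mu ℓ| - r := by
        rw [abs_of_pos (by linarith)]; linarith
      calc d k = (|mu k - mu ℓ| - r)⁻¹ := by rw [hd]; simp [hkl]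
        _ ≤ 1 := inv_le_one_of_one_le₀ h1
        _ ≤ C := hC1
  have hcoef : ∀ k θ, ‖a k (circleMap c r θ)‖ ≤ C := fun k θ => (hkey k θ).2.trans (hdC k)
  -- total square sum
  set T : ℝ := ∑' k, ‖u k‖ ^ 2 with hTdef
  have hT0 : 0 ≤ T := tsum_nonneg fun k => sq_nonneg _
  set M : ℝ := C * Real.sqrt T with hMdef
  -- pairwise orthogonality of scaled family
  have hscal : ∀ θ, Pairwise fun j k =>
      inner ℂ (a j (circleMap c r θ) • u j) (a k (circleMap c r θ) • u k) = (0:ℂ) := by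
    intro θ j k hjk
    rw [inner_smul_left, inner_smul_right, hu hjk, mul_zero, mul_zero]
  -- termwise square bound
  have hsq : ∀ θ k, ‖a k (circleMap c r θ) • u k‖ ^ 2 ≤ C ^ 2 * ‖u k‖ ^ 2 := by
    intro θ k
    rw [norm_smul, mul_pow]
    exact mul_le_mul_of_nonneg_right (pow_le_pow_left₀ (norm_nonneg _) (hcoef k θ) 2) (sq_nonneg _)
  -- uniform bound on partial sums
  have hFnorm : ∀ (θ : ℝ) (s : Finset ℕ), ‖∑ k ∈ s, a k (circleMap c r θ) • u k‖ ≤ M := by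
    intro θ s
    have h1 : ‖∑ k ∈ s, a k (circleMap c r θ) • u k‖ ^ 2 ≤ C ^ 2 * T := by
      rw [norm_sq_sum_of_pairwise_orth _ (hscal θ) s]
      calc ∑ k ∈ s, ‖a k (circleMap c r θ) • u k‖ ^ 2
          ≤ ∑ k ∈ s, C ^ 2 * ‖u k‖ ^ 2 := Finset.sum_le_sum fun k _ => hsq θ k
        _ = C ^ 2 * ∑ k ∈ s, ‖u k‖ ^ 2 := by rw [Finset.mul_sum]
        _ ≤ C ^ 2 * T :=
            mul_le_mul_of_nonneg_left
              (Summable.sum_le_tsum s (fun k _ => sq_nonneg _) hsum) (sq_nonneg C)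
    have h2 := Real.sqrt_le_sqrt h1
    rw [Real.sqrt_sq (norm_nonneg _)] at h2
    refine h2.trans_eq ?_
    rw [hMdef, Real.sqrt_mul (sq_nonneg C), Real.sqrt_sq hC0.le]
  -- summability / HasSum at each point of the circle
  have hHasSum : ∀ θ : ℝ, HasSum (fun k => a k (circleMap c r θ) • u k)
      (S (circleMap c r θ)) := by
    intro θ
    have hsummable : Summable (fun k => a k (circleMap c r θ) • u k) := by
      refine summable_of_pairwise_orth _ (hscal θ) ?_
      exact Summable.of_nonneg_of_le (fun k => sq_nonneg _) (fun k => hsq θ k)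
        (hsum.mul_left (C ^ 2))
    have := hsummable.hasSum
    rwa [hS (circleMap c r θ)]
  -- continuity of the terms
  have hcont : ∀ k, Continuous fun θ =>
      deriv (circleMap c r) θ • (a k (circleMap c r θ) • u k) := by
    intro k
    have h1 : Continuous fun θ => deriv (circleMap c r) θ := by
      simp only [deriv_circleMap]
      exact (continuous_circleMap 0 r).mul continuous_const
    have h2 : Continuous fun θ => a k (circleMap c r θ) := by
      simp only [ha]
      exact (((continuous_circleMap c r).add continuous_const).inv₀ fun θ => (hkey k θ).1)
    exact h1.smul (h2.smul continuous_const)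
  -- partial-sum integrands
  set F : ℕ → ℝ → H := fun n θ => ∑ k ∈ Finset.range n,
      deriv (circleMap c r) θ • (a k (circleMap c r θ) • u k) with hFdef
  have hFsmul : ∀ n θ, F n θ = deriv (circleMap c r) θ •
      ∑ k ∈ Finset.range n, a k (circleMap c r θ) • u k := by
    intro n θ; rw [hFdef]; exact (Finset.smul_sum).symm
  have hderivnorm : ∀ θ, ‖deriv (circleMap c r) θ‖ = r := by
    intro θ
    rw [deriv_circleMap, norm_mul, norm_circleMap_zero, Complex.norm_I,
      abs_of_pos hr, mul_one]
  -- dominated convergence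
  have htend : Tendsto (fun n => ∫ θ in (0:ℝ)..(2 * Real.pi), F n θ) atTop
      (nhds (∮ η in C(c, r), S η)) := by
    have : (∮ η in C(c, r), S η)
        = ∫ θ in (0:ℝ)..(2 * Real.pi), deriv (circleMap c r) θ • S (circleMap c r θ) := rfl
    rw [this]
    apply intervalIntegral.tendsto_integral_filter_of_dominated_convergence
      (fun _ => r * M)
    · exact Filter.Eventually.of_forall fun n =>
        (Continuous.aestronglyMeasurable (by exact continuous_finset_sum _ fun k _ => hcont k))
    · refine Filter.Eventually.of_forall fun n => Filter.Eventually.of_forall fun θ _ => ?_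
      rw [hFsmul, norm_smul, hderivnorm]
      exact mul_le_mul_of_nonneg_left (hFnorm θ _) hr.le
    · exact intervalIntegrable_const
    · refine Filter.Eventually.of_forall fun θ _ => ?_
      have h1 := (hHasSum θ).tendsto_sum_nat
      have h2 := h1.const_smul (deriv (circleMap c r) θ)
      refine h2.congr fun n => ?_
      exact (hFsmul n θ).symm
  -- evaluation of the partial integrals
  have hval : ∀ n, ℓ < n → (∫ θ in (0:ℝ)..(2 * Real.pi), F n θ)
      = (2 * Real.pi * Complex.I) • u ℓ := by
    intro n hn
    have hint : ∀ k ∈ Finset.range n, IntervalIntegrable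
        (fun θ => deriv (circleMap c r) θ • (a k (circleMap c r θ) • u k))
        MeasureTheory.volume 0 (2 * Real.pi) := fun k _ => (hcont k).intervalIntegrable _ _
    have hFint : (∫ θ in (0:ℝ)..(2 * Real.pi), F n θ)
        = ∑ k ∈ Finset.range n, ∫ θ in (0:ℝ)..(2 * Real.pi),
            deriv (circleMap c r) θ • (a k (circleMap c r θ) • u k) :=
      intervalIntegral.integral_finset_sum hint
    rw [hFint]
    have hterm : ∀ k, (∫ θ in (0:ℝ)..(2 * Real.pi),
        deriv (circleMap c r) θ • (a k (circleMap c r θ) • u k))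
        = (∮ η in C(c, r), a k η) • u k := by
      intro k
      have : (∫ θ in (0:ℝ)..(2 * Real.pi),
          deriv (circleMap c r) θ • (a k (circleMap c r θ) • u k))
          = ∮ η in C(c, r), a k η • u k := rfl
      rw [this, circleIntegral.integral_smul_const]
    have hl : (∮ η in C(c, r), a ℓ η) = 2 * Real.pi * Complex.I := by
      have heq : ∀ η : ℂ, a ℓ η = (η - c)⁻¹ := by
        intro η; rw [ha, hc]; ring_nf
      calc (∮ η in C(c, r), a ℓ η) = ∮ η in C(c, r), (η - c)⁻¹ := by
            simp only [heq]
        _ = 2 * Real.pi * Complex.I :=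
            circleIntegral.integral_sub_inv_of_mem_ball (mem_ball_self hr)
    have hzero : ∀ k, k ≠ ℓ → (∮ η in C(c, r), a k η) = 0 := by
      intro k hkl
      have hne : ∀ z ∈ closedBall c r, z + Complex.I * mu k ≠ 0 := by
        intro z hz h0
        have hzw : z = -(Complex.I * mu k) := by linear_combination h0
        have : dist (-(Complex.I * (mu k : ℂ))) c = |mu k - mu ℓ| := by
          rw [Complex.dist_eq, hc]
          have : -(Complex.I * (mu k : ℂ)) - -Complex.I * mu ℓ
              = Complex.I * ((mu ℓ : ℂ) - mu k) := by ring
          rw [this, norm_mul, Complex.norm_I, one_mul, ← Complex.ofReal_sub,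
            Complex.norm_real, Real.norm_eq_abs, abs_sub_comm]
        have hzc : dist z c ≤ r := mem_closedBall.mp hz
        rw [hzw] at hzc
        rw [this] at hzc
        exact absurd hzc (not_le.mpr (hrl k hkl))
      have hdiff : ∀ z ∈ closedBall c r, DifferentiableAt ℂ (a k) z := by
        intro z hz
        rw [ha]
        exact (differentiableAt_id.add (differentiableAt_const _)).inv (hne z hz)
      exact circleIntegral_eq_zero_of_differentiable_on_off_countable hr.le
        Set.countable_empty
        (fun z hz => (hdiff z hz).continuousAt.continuousWithinAt)
        (fun z hz => hdiff z (ball_subset_closedBall hz.1))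
    rw [Finset.sum_congr rfl fun k hk => hterm k]
    rw [Finset.sum_eq_single_of_mem ℓ (Finset.mem_range.mpr hn)
      (fun k _ hkl => by rw [hzero k hkl, zero_smul])]
    rw [hl]
  -- conclude
  have hfinal : (∮ η in C(c, r), S η) = (2 * Real.pi * Complex.I) • u ℓ := by
    refine tendsto_nhds_unique htend ?_
    refine Tendsto.congr' ?_ tendsto_const_nhds
    filter_upwards [eventually_gt_atTop ℓ] with n hn
    exact (hval n hn).symm
  rw [hfinal, smul_smul, inv_mul_cancel₀ Complex.two_pi_I_ne_zero, one_smul]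
end

section
/- Let H and H' be complex Hilbert spaces and T : H → H' a continuous linear map. Let (u_k)_{k∈ℕ} be pairwise orthogonal vectors in H with Σ_k ‖u_k‖² < ∞, and let (μ_k)_{k∈ℕ} be a strictly increasing sequence of real numbers tending to +∞, so that S(η) = Σ_{k=1}^∞ (η + i μ_k)^{−1} u_k converges in H for every η ∈ ℂ \ {−i μ_k : k ∈ ℕ}. If T(S(η)) = 0 in H' for every η ∈ ℂ \ {−i μ_k : k ∈ ℕ}, then T u_ℓ = 0 for every ℓ ∈ ℕ. -/
open scoped ComplexInnerProductSpace in
lemma myOrthFam {H : Type*} [NormedAddCommGroup H] [InnerProductSpace ℂ H]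
    (f : ℕ → H) (ho : Pairwise fun j k => inner ℂ (f j) (f k) = (0 : ℂ)) :
    OrthogonalFamily ℂ (fun k => (ℂ ∙ f k : Submodule ℂ H)) (fun k => (ℂ ∙ f k).subtypeₗᵢ) := by
  intro i j hij v w
  obtain ⟨a, ha⟩ := Submodule.mem_span_singleton.1 v.2
  obtain ⟨b, hb⟩ := Submodule.mem_span_singleton.1 w.2
  show (inner ℂ (v : H) (w : H) : ℂ) = 0
  rw [← ha, ← hb, inner_smul_left, inner_smul_right, ho hij]
  ring

lemma mySummable {H : Type*} [NormedAddCommGroup H] [InnerProductSpace ℂ H] [CompleteSpace H]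
    (f : ℕ → H) (ho : Pairwise fun j k => inner ℂ (f j) (f k) = (0 : ℂ))
    (hs : Summable fun k => ‖f k‖ ^ 2) : Summable f := by
  have := (myOrthFam f ho).summable_iff_norm_sq_summable
    (fun k => (⟨f k, Submodule.mem_span_singleton_self _⟩ : (ℂ ∙ f k : Submodule ℂ H)))
  simpa using this.2 (by simpa using hs)

lemma myNormSq {H : Type*} [NormedAddCommGroup H] [InnerProductSpace ℂ H] [CompleteSpace H]
    (f : ℕ → H) (ho : Pairwise fun j k => inner ℂ (f j) (f k) = (0 : ℂ))
    (hs : Summable fun k => ‖f k‖ ^ 2) : ‖∑' k, f k‖ ^ 2 = ∑' k, ‖f k‖ ^ 2 := by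
  have hsf : Summable f := mySummable f ho hs
  have h1 : Filter.Tendsto (fun s : Finset ℕ => ‖∑ i ∈ s, f i‖ ^ 2) Filter.atTop
      (nhds (‖∑' k, f k‖ ^ 2)) :=
    ((continuous_norm.pow 2).continuousAt).tendsto.comp hsf.hasSum
  have h2 : Filter.Tendsto (fun s : Finset ℕ => ‖∑ i ∈ s, f i‖ ^ 2) Filter.atTop
      (nhds (∑' k, ‖f k‖ ^ 2)) := by
    have heq : ∀ s : Finset ℕ, ‖∑ i ∈ s, f i‖ ^ 2 = ∑ i ∈ s, ‖f i‖ ^ 2 := by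
      intro s
      have := (myOrthFam f ho).norm_sum
        (fun k => (⟨f k, Submodule.mem_span_singleton_self _⟩ : (ℂ ∙ f k : Submodule ℂ H))) s
      simpa using this
    simp only [heq]
    exact hs.hasSum
  exact tendsto_nhds_unique h1 h2

/-- If `T : H → H'` is a continuous linear map between complex Hilbert spaces vanishing on
`S(η) = ∑ (η + i μ_k)⁻¹ u_k` for every `η` outside the set of poles `{−i μ_k}`, then
`T u_ℓ = 0` for every `ℓ`. -/
theorem vanishing_resolvent_series_implies_components
    {H H' : Type*} [NormedAddCommGroup H] [InnerProductSpace ℂ H] [CompleteSpace H]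
    [NormedAddCommGroup H'] [InnerProductSpace ℂ H'] [CompleteSpace H']
    (T : H →L[ℂ] H')
    (u : ℕ → H) (hu : Pairwise fun j k => inner ℂ (u j) (u k) = (0 : ℂ))
    (hsum : Summable fun k => ‖u k‖ ^ 2)
    (mu : ℕ → ℝ) (hmono : StrictMono mu) (htop : Filter.Tendsto mu Filter.atTop Filter.atTop)
    (hT : ∀ η : ℂ, (∀ k, η ≠ -Complex.I * mu k) →
      T (∑' k : ℕ, (η + Complex.I * mu k)⁻¹ • u k) = 0) :
    ∀ ℓ : ℕ, T (u ℓ) = 0 := by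
  intro ℓ
  classical
  -- the small real parameter
  set ε : ℕ → ℝ := fun n => ((n : ℝ) + 1)⁻¹ with hε
  have hεpos : ∀ n, 0 < ε n := fun n => by positivity
  have hεto : Filter.Tendsto ε Filter.atTop (nhds 0) := by
    simpa [hε, one_div] using tendsto_one_div_add_atTop_nhds_zero_nat (𝕜 := ℝ)
  -- the shifted spectral parameters and coefficients
  set c : ℕ → ℕ → ℂ := fun n k => ((ε n : ℂ) + Complex.I * ((mu k : ℂ) - mu ℓ))⁻¹ with hc
  have hzre : ∀ n k, ((ε n : ℂ) + Complex.I * ((mu k : ℂ) - mu ℓ)).re = ε n := by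
    intro n k; simp [Complex.add_re, Complex.mul_re]
  have hzim : ∀ n k, ((ε n : ℂ) + Complex.I * ((mu k : ℂ) - mu ℓ)).im = mu k - mu ℓ := by
    intro n k
    simp [Complex.add_im, Complex.mul_im]
  have hzne : ∀ n k, ((ε n : ℂ) + Complex.I * ((mu k : ℂ) - mu ℓ)) ≠ 0 := by
    intro n k h
    have := congrArg Complex.re h
    rw [hzre] at this
    exact (hεpos n).ne' (by simpa using this)
  -- bound ‖c n k‖ ≤ (ε n)⁻¹
  have hcbound : ∀ n k, ‖c n k‖ ≤ (ε n)⁻¹ := by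
    intro n k
    rw [hc, norm_inv]
    apply inv_anti₀ (hεpos n)
    calc ε n = |((ε n : ℂ) + Complex.I * ((mu k : ℂ) - mu ℓ)).re| := by
          rw [hzre]; exact (abs_of_pos (hεpos n)).symm
      _ ≤ ‖(ε n : ℂ) + Complex.I * ((mu k : ℂ) - mu ℓ)‖ := by
          exact Complex.abs_re_le_norm _
  -- bound ‖c n k‖ ≤ |mu k - mu ℓ|⁻¹ for k ≠ ℓ
  have hcbound2 : ∀ n k, mu k ≠ mu ℓ → ‖c n k‖ ≤ |mu k - mu ℓ|⁻¹ := by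
    intro n k h
    rw [hc, norm_inv]
    apply inv_anti₀ (by simpa [sub_eq_zero] using h)
    calc |mu k - mu ℓ| = |((ε n : ℂ) + Complex.I * ((mu k : ℂ) - mu ℓ)).im| := by rw [hzim]
      _ ≤ ‖(ε n : ℂ) + Complex.I * ((mu k : ℂ) - mu ℓ)‖ := by
          exact Complex.abs_im_le_norm _
  -- summability of the resolvent series
  have horth : ∀ (a : ℕ → ℂ), Pairwise fun j k => inner ℂ (a j • u j) (a k • u k) = (0 : ℂ) := by
    intro a j k hjk
    rw [inner_smul_left, inner_smul_right, hu hjk]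
    ring
  have hsummable : ∀ (a : ℕ → ℂ) (C : ℝ), (∀ k, ‖a k‖ ≤ C) →
      Summable fun k => ‖a k • u k‖ ^ 2 := by
    intro a C hC
    apply Summable.of_nonneg_of_le (fun k => by positivity)
      (fun k => ?_) (hsum.mul_left (C ^ 2))
    rw [norm_smul, mul_pow]
    have h0 : (0:ℝ) ≤ C := le_trans (norm_nonneg _) (hC 0)
    gcongr
    exact hC k
  -- T vanishes on each resolvent series
  have hTn : ∀ n, T (∑' k, c n k • u k) = 0 := by
    intro n
    have hη : ∀ k, ((ε n : ℂ) - Complex.I * mu ℓ) ≠ -Complex.I * mu k := by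
      intro k h
      have := congrArg Complex.re h
      simp [Complex.sub_re, Complex.mul_re] at this
      exact (hεpos n).ne' this
    have := hT ((ε n : ℂ) - Complex.I * mu ℓ) hη
    have heq : ∀ k, (((ε n : ℂ) - Complex.I * mu ℓ) + Complex.I * mu k)⁻¹ = c n k := by
      intro k; rw [hc]; ring_nf
    simpa only [heq] using this
  -- the rescaled sums
  set a : ℕ → ℕ → ℂ := fun n k => (ε n : ℂ) * c n k with ha
  have habound : ∀ n k, ‖a n k‖ ≤ 1 := by
    intro n k
    rw [ha, norm_mul, Complex.norm_real, Real.norm_eq_abs, abs_of_pos (hεpos n)]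
    calc ε n * ‖c n k‖ ≤ ε n * (ε n)⁻¹ := by
          exact mul_le_mul_of_nonneg_left (hcbound n k) (hεpos n).le
      _ = 1 := mul_inv_cancel₀ (hεpos n).ne'
  set w : ℕ → H := fun n => ∑' k, a n k • u k with hw
  have hTw : ∀ n, T (w n) = 0 := by
    intro n
    have hs : Summable fun k => c n k • u k :=
      mySummable _ (horth _) (hsummable _ ((ε n)⁻¹) (hcbound n))
    have : w n = (ε n : ℂ) • ∑' k, c n k • u k := by
      rw [hw, ← Summable.tsum_const_smul _ hs]
      simp only [ha, smul_smul]
    rw [this, map_smul, hTn n, smul_zero]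
  -- the coefficients of w n - u ℓ
  set b : ℕ → ℕ → ℂ := fun n k => a n k - (if k = ℓ then 1 else 0) with hb
  have hbbound : ∀ n k, ‖b n k‖ ≤ 2 := by
    intro n k
    calc ‖b n k‖ ≤ ‖a n k‖ + ‖(if k = ℓ then (1:ℂ) else 0)‖ := norm_sub_le _ _
      _ ≤ 1 + 1 := by
          apply add_le_add (habound n k)
          split <;> simp
      _ = 2 := by norm_num
  have hdiff : ∀ n, w n - u ℓ = ∑' k, b n k • u k := by
    intro n
    have hs1 : Summable fun k => a n k • u k :=
      mySummable _ (horth _) (hsummable _ 1 (habound n))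
    have hs2 : Summable fun k => (if k = ℓ then (1:ℂ) else 0) • u k := by
      apply summable_of_ne_finset_zero (s := {ℓ})
      intro k hk
      simp only [Finset.mem_singleton] at hk
      simp [hk]
    have h2 : ∑' k, (if k = ℓ then (1:ℂ) else 0) • u k = u ℓ := by
      have : ∀ k, (if k = ℓ then (1:ℂ) else 0) • u k = (if k = ℓ then u ℓ else 0) := by
        intro k; split <;> simp_all
      rw [funext this, tsum_ite_eq]
    show (∑' k, a n k • u k) - u ℓ = _
    rw [← h2, ← Summable.tsum_sub hs1 hs2]
    simp only [hb, sub_smul]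
  -- norm squared of the difference tends to zero
  have hnorm2 : Filter.Tendsto (fun n => ‖w n - u ℓ‖ ^ 2) Filter.atTop (nhds 0) := by
    have hkey : ∀ n, ‖w n - u ℓ‖ ^ 2 = ∑' k, ‖b n k • u k‖ ^ 2 := by
      intro n
      rw [hdiff n]
      exact myNormSq _ (horth _) (hsummable _ 2 (hbbound n))
    simp only [hkey]
    have h0 : (0:ℝ) = ∑' k : ℕ, (0:ℝ) := by simp
    rw [h0]
    apply tendsto_tsum_of_dominated_convergence (bound := fun k => 4 * ‖u k‖ ^ 2)
      (hsum.mul_left 4)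
    · intro k
      rcases eq_or_ne k ℓ with rfl | hk
      · -- b n k = 0
        have : ∀ n, b n k = 0 := by
          intro n
          have hcc : c n k = (ε n : ℂ)⁻¹ := by rw [hc]; simp
          have hne : ((ε n : ℝ) : ℂ) ≠ 0 := by exact_mod_cast (hεpos n).ne'
          simp [hb, ha, hcc, mul_inv_cancel₀ hne]
        simp [this]
      · -- squeeze: ‖b n k • u k‖^2 ≤ (ε n * |mu k - mu ℓ|⁻¹ * ‖u k‖)^2 → 0
        have hrne : mu k ≠ mu ℓ := fun h => hk (hmono.injective h)
        have hrpos : 0 < |mu k - mu ℓ| := by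
          rw [abs_pos, sub_ne_zero]; exact hrne
        apply squeeze_zero (fun n => by positivity)
          (g := fun n => (ε n * |mu k - mu ℓ|⁻¹ * ‖u k‖) ^ 2)
        · intro n
          have hbk : ‖b n k‖ ≤ ε n * |mu k - mu ℓ|⁻¹ := by
            simp only [hb, if_neg hk, sub_zero, ha, norm_mul, Complex.norm_real,
              Real.norm_eq_abs, abs_of_pos (hεpos n)]
            exact mul_le_mul_of_nonneg_left (hcbound2 n k hrne) (hεpos n).le
          calc ‖b n k • u k‖ ^ 2 = ‖b n k‖ ^ 2 * ‖u k‖ ^ 2 := by rw [norm_smul, mul_pow]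
            _ ≤ (ε n * |mu k - mu ℓ|⁻¹) ^ 2 * ‖u k‖ ^ 2 :=
                mul_le_mul_of_nonneg_right (pow_le_pow_left₀ (norm_nonneg _) hbk 2)
                  (by positivity)
            _ = (ε n * |mu k - mu ℓ|⁻¹ * ‖u k‖) ^ 2 := by ring
        · have : Filter.Tendsto (fun n => ε n * |mu k - mu ℓ|⁻¹ * ‖u k‖)
              Filter.atTop (nhds 0) := by
            have := (hεto.mul_const (|mu k - mu ℓ|⁻¹)).mul_const (‖u k‖)
            simpa using this
          simpa using (this.pow 2)
    · filter_upwards with n k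
      rw [Real.norm_eq_abs, abs_of_nonneg (by positivity), norm_smul, mul_pow]
      have h2 : ‖b n k‖ ^ 2 ≤ 4 := by
        have := pow_le_pow_left₀ (norm_nonneg (b n k)) (hbbound n k) 2
        norm_num at this
        exact this
      exact mul_le_mul_of_nonneg_right h2 (sq_nonneg _)
  -- conclude w n → u ℓ
  have hwto : Filter.Tendsto w Filter.atTop (nhds (u ℓ)) := by
    rw [tendsto_iff_norm_sub_tendsto_zero]
    have := (Real.continuous_sqrt.continuousAt).tendsto.comp hnorm2
    simp only [Function.comp_def, Real.sqrt_sq (norm_nonneg _), Real.sqrt_zero] at this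
    simpa using this
  have hTto : Filter.Tendsto (fun n => T (w n)) Filter.atTop (nhds (T (u ℓ))) :=
    (T.continuous.continuousAt).tendsto.comp hwto
  simp only [hTw] at hTto
  exact (tendsto_nhds_unique tendsto_const_nhds hTto).symm
end

section
/- Let 0 < α < 1 and ζ ∈ ℂ. Then the function f(τ) = E_{α,1}(ζ τ^α) is differentiable on (0, ∞), and for every t > 0 its Caputo fractional derivative of order α exists and satisfies (1/Γ(1−α)) ∫₀^t (t−τ)^{−α} f'(τ) dτ = ζ E_{α,1}(ζ t^α). -/
open Real Set Filter MeasureTheory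


/-- Log-convexity consequence: `x Γ(x) ≤ Γ(x+a) (x+a)^(1-a)` for `0 < a < 1`, `0 < x`. -/
lemma gamma_ratio_aux {a : ℝ} (ha0 : 0 < a) (ha1 : a < 1) {x : ℝ} (hx : 0 < x) :
    x * Real.Gamma x ≤ Real.Gamma (x + a) * (x + a) ^ (1 - a) := by
  have hxa : 0 < x + a := by linarith
  have h1 : Real.Gamma (a * (x + a) + (1 - a) * (x + a + 1)) ≤
      Real.Gamma (x + a) ^ a * Real.Gamma (x + a + 1) ^ (1 - a) :=
    Real.Gamma_mul_add_mul_le_rpow_Gamma_mul_rpow_Gamma hxa (by linarith) ha0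
      (by linarith) (by ring)
  have h2 : a * (x + a) + (1 - a) * (x + a + 1) = x + 1 := by ring
  rw [h2, Real.Gamma_add_one hx.ne'] at h1
  have h3 : Real.Gamma (x + a + 1) = (x + a) * Real.Gamma (x + a) :=
    Real.Gamma_add_one hxa.ne'
  rw [h3, Real.mul_rpow hxa.le (Real.Gamma_pos_of_pos hxa).le] at h1
  calc x * Real.Gamma x ≤ Real.Gamma (x + a) ^ a *
        ((x + a) ^ (1 - a) * Real.Gamma (x + a) ^ (1 - a)) := h1
    _ = Real.Gamma (x + a) ^ (a + (1 - a)) * (x + a) ^ (1 - a) := by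
        rw [Real.rpow_add (Real.Gamma_pos_of_pos hxa)]; ring
    _ = Real.Gamma (x + a) * (x + a) ^ (1 - a) := by norm_num

/-- Master summability lemma. -/
lemma summable_master {a : ℝ} (ha0 : 0 < a) (ha1 : a < 1) {R : ℝ} (hR : 0 ≤ R) :
    Summable (fun k : ℕ => (k + 1 : ℝ) * R ^ k / Real.Gamma (a * k + 1)) := by
  apply summable_of_ratio_norm_eventually_le (r := 1/2) (by norm_num)
  have htend : Tendsto (fun k : ℕ => (a * k + 1) ^ a) atTop atTop := by
    apply (tendsto_rpow_atTop ha0).comp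
    apply tendsto_atTop_add_const_right
    exact Tendsto.const_mul_atTop ha0 tendsto_natCast_atTop_atTop
  filter_upwards [htend.eventually_ge_atTop (8 * R + 8), eventually_ge_atTop 1] with k hk hk1
  have hG : ∀ y : ℝ, 0 < y → 0 < Real.Gamma y := fun y hy => Real.Gamma_pos_of_pos hy
  have hak : (0:ℝ) ≤ a * k := by positivity
  have hk1' : (1:ℝ) ≤ k := by exact_mod_cast hk1
  have hak1 : a ≤ a * k := by nlinarith
  have hx : (0:ℝ) < a * k + 1 := by positivity
  have hxa : (0:ℝ) < a * k + 1 + a := by positivity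
  have hGx := hG _ hx
  have hGxa := hG _ hxa
  -- ratio bound
  have key : Real.Gamma (a * k + 1) * (4 * R) ≤ Real.Gamma (a * (k + 1) + 1) := by
    have h1 := gamma_ratio_aux ha0 ha1 hx
    have h2 : a * (k + 1) + 1 = (a * k + 1) + a := by push_cast; ring
    rw [h2]
    have hple : ((a * k + 1) + a) ^ (1 - a) ≤ (a * k + 1) + a := by
      nth_rewrite 2 [(Real.rpow_one ((a * k + 1) + a)).symm]
      apply Real.rpow_le_rpow_of_exponent_le (by linarith) (by linarith)
    -- from h1 : (a*k+1) * Γ(a*k+1) ≤ Γ(a*k+1+a) * (a*k+1+a)^(1-a)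
    have h4 : (a * k + 1) * Real.Gamma (a * k + 1) ≤
        Real.Gamma (a * k + 1 + a) * ((a * k + 1) + a) := by
      calc (a * k + 1) * Real.Gamma (a * k + 1)
          ≤ Real.Gamma (a * k + 1 + a) * ((a * k + 1) + a) ^ (1 - a) := h1
        _ ≤ Real.Gamma (a * k + 1 + a) * ((a * k + 1) + a) := by
            apply mul_le_mul_of_nonneg_left hple (hG _ hxa).le
    -- we need Γ(ak+1) * 4R ≤ Γ(ak+1+a); use (ak+1)/(ak+1+a) ≥ ... combined with (ak+1)^a ≥ 8R+8
    -- From h4 : Γ(ak+1+a) ≥ (ak+1) Γ(ak+1) / (ak+1+a)^(1-a)... redo with rpow form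
    have h5 : (a * k + 1) * Real.Gamma (a * k + 1) / ((a * k + 1) + a) ^ (1 - a) ≤
        Real.Gamma (a * k + 1 + a) := by
      rw [div_le_iff₀ (by positivity)]
      linarith [h1]
    refine le_trans ?_ h5
    rw [le_div_iff₀ (by positivity)]
    -- Γ(ak+1) * 4R * (ak+1+a)^{1-a} ≤ (ak+1) * Γ(ak+1)
    -- suffices: 4R * (ak+1+a)^{1-a} ≤ ak+1
    have h6 : (4 * R) * ((a * k + 1) + a) ^ (1 - a) ≤ a * k + 1 := by
      have e1 : ((a * k + 1) + a) ^ (1 - a) = ((a * k + 1) + a) / ((a * k + 1) + a) ^ a := by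
        rw [eq_div_iff (by positivity), ← Real.rpow_add hxa]
        norm_num
      rw [e1, ← mul_div_assoc, div_le_iff₀ (by positivity)]
      have e2 : (a * k + 1) + a ≤ 2 * (a * k + 1) := by linarith
      have e3 : (a * k + 1) ^ a ≤ ((a * k + 1) + a) ^ a :=
        Real.rpow_le_rpow hx.le (by linarith) ha0.le
      calc 4 * R * ((a * k + 1) + a) ≤ 4 * R * (2 * (a * k + 1)) := by
            apply mul_le_mul_of_nonneg_left e2 (by positivity)
        _ = (8 * R) * (a * k + 1) := by ring
        _ ≤ (a * k + 1) ^ a * (a * k + 1) := by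
            apply mul_le_mul_of_nonneg_right _ hx.le
            calc (8:ℝ) * R ≤ 8 * R + 8 := by linarith
              _ ≤ (a * k + 1) ^ a := hk
        _ ≤ ((a * k + 1) + a) ^ a * (a * k + 1) := by
            apply mul_le_mul_of_nonneg_right e3 hx.le
        _ = (a * k + 1) * ((a * k + 1) + a) ^ a := by ring
    calc Real.Gamma (a * k + 1) * (4 * R) * ((a * k + 1) + a) ^ (1 - a)
        ≤ Real.Gamma (a * k + 1) * (a * k + 1) := by
          rw [mul_assoc]
          apply mul_le_mul_of_nonneg_left h6 hGx.le
      _ = (a * k + 1) * Real.Gamma (a * k + 1) := by ring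
  -- now conclude the ratio inequality
  rw [Real.norm_eq_abs, Real.norm_eq_abs, abs_of_nonneg (by positivity),
    abs_of_nonneg (by positivity)]
  push_cast
  push_cast at key
  have hGk1 : (0:ℝ) < Real.Gamma (a * ((k:ℝ) + 1) + 1) := hG _ (by positivity)
  rw [← mul_div_assoc, div_le_div_iff₀ hGk1 hGx]
  calc ((k:ℝ) + 1 + 1) * R ^ (k + 1) * Real.Gamma (a * ((k:ℝ)) + 1)
      ≤ (2 * ((k:ℝ) + 1)) * R ^ (k + 1) * Real.Gamma (a * ((k:ℝ)) + 1) := by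
        apply mul_le_mul_of_nonneg_right _ hGx.le
        apply mul_le_mul_of_nonneg_right _ (by positivity)
        linarith [Nat.cast_nonneg (α := ℝ) k]
    _ = (1 / 2 * (((k:ℝ) + 1) * R ^ k)) * (Real.Gamma (a * ((k:ℝ)) + 1) * (4 * R)) := by
        ring
    _ ≤ (1 / 2 * (((k:ℝ) + 1) * R ^ k)) * Real.Gamma (a * ((k:ℝ) + 1) + 1) := by
        apply mul_le_mul_of_nonneg_left key (by positivity)

noncomputable def mlTerm (a : ℝ) (ζ : ℂ) (k : ℕ) (s : ℝ) : ℂ :=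
  (ζ * ((s ^ a : ℝ) : ℂ)) ^ k / (Real.Gamma (a * k + 1) : ℂ)

noncomputable def mlTerm' (a : ℝ) (ζ : ℂ) (k : ℕ) (s : ℝ) : ℂ :=
  ζ ^ k * ((a * k * s ^ (a * k - 1) : ℝ) : ℂ) / (Real.Gamma (a * k + 1) : ℂ)


lemma hasDerivAt_mlTerm (a : ℝ) (ζ : ℂ) (k : ℕ) {s : ℝ} (hs : 0 < s) :
    HasDerivAt (mlTerm a ζ k) (mlTerm' a ζ k s) s := by
  have h0 : HasDerivAt (fun x : ℝ => x ^ (a * k)) (a * k * s ^ (a * k - 1)) s :=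
    Real.hasDerivAt_rpow_const (Or.inl hs.ne')
  have h2 := (h0.ofReal_comp.const_mul (ζ ^ k)).div_const ((Real.Gamma (a * k + 1) : ℂ))
  apply h2.congr_of_eventuallyEq
  filter_upwards [isOpen_Ioi.mem_nhds (mem_Ioi.mpr hs)] with x hx
  have hx0 : (0:ℝ) < x := hx
  unfold mlTerm
  rw [mul_pow, ← Complex.ofReal_pow, ← Real.rpow_natCast (x ^ a) k, ← Real.rpow_mul hx0.le]

lemma norm_mlTerm' (a : ℝ) (ha0 : 0 < a) (ζ : ℂ) (k : ℕ) {s : ℝ} (hs : 0 < s) :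
    ‖mlTerm' a ζ k s‖ = ‖ζ‖ ^ k * (a * k * s ^ (a * k - 1)) / Real.Gamma (a * k + 1) := by
  have hΓ : (0:ℝ) < Real.Gamma (a * k + 1) := Real.Gamma_pos_of_pos (by positivity)
  have h1 : (0:ℝ) ≤ a * k * s ^ (a * k - 1) := by positivity
  rw [mlTerm', norm_div, norm_mul, norm_pow, Complex.norm_real, Complex.norm_real,
    Real.norm_eq_abs, Real.norm_eq_abs, abs_of_nonneg h1, abs_of_nonneg hΓ.le]

lemma summable_mlTerm (a : ℝ) (ha0 : 0 < a) (ha1 : a < 1) (ζ : ℂ) {s : ℝ} (hs : 0 ≤ s) :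
    Summable (fun k => mlTerm a ζ k s) := by
  apply Summable.of_norm_bounded (summable_master ha0 ha1
    (R := ‖ζ‖ * s ^ a) (by positivity))
  intro k
  have hΓ : (0:ℝ) < Real.Gamma (a * k + 1) := Real.Gamma_pos_of_pos (by positivity)
  rw [mlTerm, norm_div, norm_pow, norm_mul, Complex.norm_real, Complex.norm_real,
    Real.norm_eq_abs, Real.norm_eq_abs, abs_of_nonneg hΓ.le,
    abs_of_nonneg (Real.rpow_nonneg hs a)]
  have h1 : ((‖ζ‖ * s ^ a) ^ k : ℝ) ≤ ((k:ℝ) + 1) * (‖ζ‖ * s ^ a) ^ k := by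
    nlinarith [pow_nonneg (mul_nonneg (norm_nonneg ζ) (Real.rpow_nonneg hs a)) k,
      Nat.cast_nonneg (α := ℝ) k]
  exact div_le_div₀ (by positivity) h1 hΓ le_rfl

lemma hasDerivAt_ml (a : ℝ) (ha0 : 0 < a) (ha1 : a < 1) (ζ : ℂ) {τ : ℝ} (hτ : 0 < τ) :
    HasDerivAt (fun s : ℝ => mittagLeffler a 1 (ζ * ((s ^ a : ℝ) : ℂ)))
      (∑' k, mlTerm' a ζ k τ) τ := by
  suffices H : HasDerivAt (fun s : ℝ => ∑' k, mlTerm a ζ k s) (∑' k, mlTerm' a ζ k τ) τ from H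
  have hM1 : (1:ℝ) ≤ τ + 1 := by linarith
  set u : ℕ → ℝ := fun k => 2 * a / τ * ((k + 1 : ℝ) * (‖ζ‖ * (τ + 1) ^ a) ^ k /
    Real.Gamma (a * k + 1)) with hu_def
  have hu : Summable u := (summable_master ha0 ha1 (by positivity)).mul_left _
  apply hasDerivAt_tsum_of_isPreconnected hu (isOpen_Ioo (a := τ/2) (b := τ+1))
    ((convex_Ioo _ _).isPreconnected)
    (fun k y hy => hasDerivAt_mlTerm a ζ k (by linarith [hy.1] : (0:ℝ) < y))
    ?_ (⟨by linarith, by linarith⟩ : τ ∈ Ioo (τ/2) (τ+1))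
    (summable_mlTerm a ha0 ha1 ζ hτ.le)
    (⟨by linarith, by linarith⟩ : τ ∈ Ioo (τ/2) (τ+1))
  intro k y hy
  have hy0 : (0:ℝ) < y := by linarith [hy.1]
  rw [norm_mlTerm' a ha0 ζ k hy0, hu_def]
  have hΓ : (0:ℝ) < Real.Gamma (a * k + 1) := Real.Gamma_pos_of_pos (by positivity)
  rw [div_le_iff₀ hΓ]
  have key : y ^ (a * k - 1) ≤ (τ + 1) ^ (a * k) * (2 / τ) := by
    rw [Real.rpow_sub_one hy0.ne']
    calc y ^ (a * k) / y ≤ (τ + 1) ^ (a * k) / (τ / 2) := by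
          apply div_le_div₀ (by positivity)
            (Real.rpow_le_rpow hy0.le (by linarith [hy.2]) (by positivity))
            (by linarith) (by linarith [hy.1])
      _ = (τ + 1) ^ (a * k) * (2 / τ) := by rw [div_div_eq_mul_div, mul_div_assoc]
  calc ‖ζ‖ ^ k * (a * k * y ^ (a * k - 1))
      ≤ ‖ζ‖ ^ k * (a * k * ((τ + 1) ^ (a * k) * (2 / τ))) := by
        apply mul_le_mul_of_nonneg_left _ (by positivity)
        apply mul_le_mul_of_nonneg_left key (by positivity)
    _ ≤ 2 * a / τ * (((k:ℝ) + 1) * (‖ζ‖ * (τ + 1) ^ a) ^ k) := by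
        have hexp : (τ + 1) ^ (a * (k:ℝ)) = ((τ + 1) ^ a) ^ k := by
          rw [← Real.rpow_natCast ((τ+1)^a) k, ← Real.rpow_mul (by linarith)]
        rw [hexp, mul_pow]
        have hkk : (k:ℝ) ≤ (k:ℝ) + 1 := by linarith
        calc ‖ζ‖ ^ k * (a * k * (((τ+1)^a) ^ k * (2 / τ)))
            = 2 * a / τ * ((k:ℝ) * (‖ζ‖ ^ k * ((τ+1)^a) ^ k)) := by ring
          _ ≤ 2 * a / τ * (((k:ℝ)+1) * (‖ζ‖ ^ k * ((τ+1)^a) ^ k)) := by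
              apply mul_le_mul_of_nonneg_left _ (by positivity)
              apply mul_le_mul_of_nonneg_right hkk (by positivity)
          _ = 2 * a / τ * (((k:ℝ)+1) * (‖ζ‖ ^ k * ((τ+1)^a) ^ k)) := by ring
    _ = 2 * a / τ * ((k + 1 : ℝ) * (‖ζ‖ * (τ + 1) ^ a) ^ k / Real.Gamma (a * k + 1)) *
        Real.Gamma (a * k + 1) := by
        rw [mul_pow]; field_simp

lemma beta_integrable {p T a : ℝ} (hp : 0 < p) (hT : 0 < T) (ha0 : 0 < a) (ha1 : a < 1) :
    IntegrableOn (fun τ : ℝ => τ ^ (p - 1) * (T - τ) ^ (-a)) (Set.Ioo 0 T) := by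
  have hmeas : Measurable fun τ : ℝ => τ ^ (p - 1) * (T - τ) ^ (-a) := by
    fun_prop
  have h1 : IntegrableOn (fun τ : ℝ => τ ^ (p - 1) * (T - τ) ^ (-a)) (Set.Ioc 0 (T/2)) := by
    have base : IntegrableOn (fun τ : ℝ => τ ^ (p - 1)) (Set.Ioc 0 (T/2)) := by
      have h := intervalIntegral.intervalIntegrable_rpow' (a := 0) (b := T/2)
        (by linarith : (-1:ℝ) < p - 1)
      rwa [intervalIntegrable_iff_integrableOn_Ioc_of_le (by linarith)] at h
    apply Integrable.mono' (base.const_mul ((T/2) ^ (-a))) hmeas.aestronglyMeasurable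
    filter_upwards [ae_restrict_mem measurableSet_Ioc] with τ hτ
    have h0 : (0:ℝ) < τ := hτ.1
    have h2 : τ ≤ T/2 := hτ.2
    rw [Real.norm_eq_abs, abs_of_nonneg (mul_nonneg (Real.rpow_nonneg h0.le _)
      (Real.rpow_nonneg (by linarith) _))]
    have hb : (T - τ) ^ (-a) ≤ (T/2) ^ (-a) :=
      Real.rpow_le_rpow_of_nonpos (by linarith) (by linarith) (by linarith)
    calc τ ^ (p-1) * (T - τ) ^ (-a) ≤ τ ^ (p-1) * (T/2) ^ (-a) := by
          apply mul_le_mul_of_nonneg_left hb (by positivity)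
      _ = (T/2) ^ (-a) * τ ^ (p-1) := by ring
  have h2 : IntegrableOn (fun τ : ℝ => τ ^ (p - 1) * (T - τ) ^ (-a)) (Set.Ioc (T/2) T) := by
    have base : IntegrableOn (fun τ : ℝ => (T - τ) ^ (-a)) (Set.Ioc (T/2) T) := by
      have i0 : IntervalIntegrable (fun x : ℝ => x ^ (-a)) volume 0 (T/2) :=
        intervalIntegral.intervalIntegrable_rpow' (by linarith)
      have i1 := (i0.comp_sub_left T).symm
      simp only [sub_zero] at i1
      rw [show T - T/2 = T/2 by ring] at i1
      rwa [intervalIntegrable_iff_integrableOn_Ioc_of_le (by linarith)] at i1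
    apply Integrable.mono' (base.const_mul ((T/2) ^ (p-1) + T ^ (p-1)))
      hmeas.aestronglyMeasurable
    filter_upwards [ae_restrict_mem measurableSet_Ioc] with τ hτ
    have h0 : (0:ℝ) < τ := lt_of_le_of_lt (by linarith) hτ.1
    rw [Real.norm_eq_abs, abs_of_nonneg (mul_nonneg (Real.rpow_nonneg h0.le _)
      (Real.rpow_nonneg (by linarith [hτ.2]) _))]
    have hc : τ ^ (p-1) ≤ (T/2) ^ (p-1) + T ^ (p-1) := by
      rcases le_or_gt 1 p with hp1 | hp1
      · have : τ ^ (p-1) ≤ T ^ (p-1) :=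
          Real.rpow_le_rpow h0.le hτ.2 (by linarith)
        have h3 : (0:ℝ) < (T/2) ^ (p-1) := by positivity
        linarith
      · have : τ ^ (p-1) ≤ (T/2) ^ (p-1) :=
          Real.rpow_le_rpow_of_nonpos (by linarith) hτ.1.le (by linarith)
        have h3 : (0:ℝ) < T ^ (p-1) := by positivity
        linarith
    calc τ ^ (p-1) * (T - τ) ^ (-a)
        ≤ ((T/2) ^ (p-1) + T ^ (p-1)) * (T - τ) ^ (-a) := by
          apply mul_le_mul_of_nonneg_right hc (Real.rpow_nonneg (by linarith [hτ.2]) _)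
      _ = _ := rfl
  apply (h1.union h2).mono_set
  intro x hx
  rcases le_or_gt x (T/2) with h | h
  · exact Or.inl ⟨hx.1, h⟩
  · exact Or.inr ⟨h, hx.2.le⟩

lemma beta_value {p T a : ℝ} (hp : 0 < p) (hT : 0 < T) (ha0 : 0 < a) (ha1 : a < 1) :
    ∫ τ in Set.Ioo (0:ℝ) T, τ ^ (p - 1) * (T - τ) ^ (-a) =
      Real.Gamma p * Real.Gamma (1 - a) / Real.Gamma (p + 1 - a) * T ^ (p - a) := by
  have h1a : (0:ℝ) < 1 - a := by linarith
  have hre : 0 < ((p:ℂ) + ((1 - a : ℝ) : ℂ)).re := by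
    simp only [Complex.add_re, Complex.ofReal_re]; linarith
  have hne : Complex.Gamma ((p:ℂ) + ((1 - a : ℝ) : ℂ)) ≠ 0 :=
    Complex.Gamma_ne_zero_of_re_pos hre
  have hbeta : Complex.betaIntegral (p:ℂ) ((1 - a : ℝ) : ℂ) =
      Complex.Gamma (p:ℂ) * Complex.Gamma ((1 - a : ℝ) : ℂ) /
        Complex.Gamma ((p:ℂ) + ((1 - a : ℝ) : ℂ)) := by
    rw [eq_div_iff hne, mul_comm _ (Complex.Gamma _)]
    exact (Complex.Gamma_mul_Gamma_eq_betaIntegral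
      (by simpa using hp) (by simpa using h1a)).symm
  have hsc := Complex.betaIntegral_scaled (p:ℂ) ((1 - a : ℝ) : ℂ) hT
  have hL : (∫ x in (0:ℝ)..T, (x:ℂ) ^ ((p:ℂ) - 1) * ((T:ℂ) - (x:ℂ)) ^ (((1 - a : ℝ) : ℂ) - 1))
      = ((∫ τ in Set.Ioo (0:ℝ) T, τ ^ (p - 1) * (T - τ) ^ (-a) : ℝ) : ℂ) := by
    rw [intervalIntegral.integral_of_le hT.le,
      show (∫ τ in Set.Ioo (0:ℝ) T, τ ^ (p - 1) * (T - τ) ^ (-a) : ℝ)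
        = ∫ τ in Set.Ioc (0:ℝ) T, τ ^ (p - 1) * (T - τ) ^ (-a) from
          (MeasureTheory.integral_Ioc_eq_integral_Ioo).symm]
    calc (∫ x in Set.Ioc (0:ℝ) T, (x:ℂ) ^ ((p:ℂ) - 1) * ((T:ℂ) - (x:ℂ)) ^ (((1 - a : ℝ) : ℂ) - 1))
        = ∫ x in Set.Ioc (0:ℝ) T, ((x ^ (p - 1) * (T - x) ^ (-a) : ℝ) : ℂ) := by
          apply setIntegral_congr_fun measurableSet_Ioc
          intro x hx
          have hx0 : (0:ℝ) ≤ x := hx.1.le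
          have hxT : (0:ℝ) ≤ T - x := sub_nonneg.mpr hx.2
          dsimp only
          rw [Complex.ofReal_mul, Complex.ofReal_cpow hx0, Complex.ofReal_cpow hxT]
          have e1 : ((p - 1 : ℝ) : ℂ) = (p:ℂ) - 1 := by push_cast; ring
          have e2 : ((-a : ℝ) : ℂ) = ((1 - a : ℝ) : ℂ) - 1 := by push_cast; ring
          have e3 : ((T - x : ℝ) : ℂ) = (T:ℂ) - (x:ℂ) := by push_cast; ring
          rw [e1, e2, e3]
      _ = ((∫ x in Set.Ioc (0:ℝ) T, x ^ (p - 1) * (T - x) ^ (-a) : ℝ) : ℂ) :=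
          integral_ofReal
  have hR : (T:ℂ) ^ ((p:ℂ) + ((1 - a : ℝ) : ℂ) - 1) *
        Complex.betaIntegral (p:ℂ) ((1 - a : ℝ) : ℂ)
      = ((Real.Gamma p * Real.Gamma (1 - a) / Real.Gamma (p + 1 - a) * T ^ (p - a) : ℝ) : ℂ) := by
    rw [hbeta]
    have e4 : (p:ℂ) + ((1 - a : ℝ) : ℂ) - 1 = ((p - a : ℝ) : ℂ) := by push_cast; ring
    have e5 : (p:ℂ) + ((1 - a : ℝ) : ℂ) = ((p + 1 - a : ℝ) : ℂ) := by push_cast; ring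
    rw [e4, e5, ← Complex.ofReal_cpow hT.le, Complex.Gamma_ofReal, Complex.Gamma_ofReal,
      Complex.Gamma_ofReal]
    push_cast
    ring
  rw [hL, hR] at hsc
  exact_mod_cast hsc

/-- For `0 < α < 1` and `ζ ∈ ℂ`, the function `f(τ) = E_{α,1}(ζ τ^α)` is differentiable on
`(0,∞)`, and for every `t > 0` its Caputo derivative of order `α` exists and equals
`ζ E_{α,1}(ζ t^α)`. -/
theorem caputo_deriv_mittagLeffler (a : ℝ) (ha0 : 0 < a) (ha1 : a < 1) (ζ : ℂ) :
    (∀ τ ∈ Set.Ioi (0 : ℝ),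
      DifferentiableAt ℝ (fun s : ℝ => mittagLeffler a 1 (ζ * ((s ^ a : ℝ) : ℂ))) τ) ∧
    ∀ t : ℝ, 0 < t →
      MeasureTheory.IntegrableOn
        (fun τ : ℝ => (((t - τ) ^ (-a) : ℝ) : ℂ) *
          deriv (fun s : ℝ => mittagLeffler a 1 (ζ * ((s ^ a : ℝ) : ℂ))) τ)
        (Set.Ioo 0 t) ∧
      (1 / (Real.Gamma (1 - a) : ℂ)) *
          ∫ τ in Set.Ioo (0 : ℝ) t, (((t - τ) ^ (-a) : ℝ) : ℂ) *
            deriv (fun s : ℝ => mittagLeffler a 1 (ζ * ((s ^ a : ℝ) : ℂ))) τ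
        = ζ * mittagLeffler a 1 (ζ * ((t ^ a : ℝ) : ℂ)) := by
  have h1a : (0:ℝ) < 1 - a := by linarith
  have hΓpos : ∀ x : ℝ, 0 < x → 0 < Real.Gamma x := fun x hx => Real.Gamma_pos_of_pos hx
  constructor
  · exact fun τ hτ => (hasDerivAt_ml a ha0 ha1 ζ (mem_Ioi.mp hτ)).differentiableAt
  intro t ht
  have hderiv : ∀ τ : ℝ, 0 < τ →
      deriv (fun s : ℝ => mittagLeffler a 1 (ζ * ((s ^ a : ℝ) : ℂ))) τ
        = ∑' k, mlTerm' a ζ k τ := fun τ hτ => (hasDerivAt_ml a ha0 ha1 ζ hτ).deriv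
  set M : ℝ := max t 1 with hM_def
  have hM1 : (1:ℝ) ≤ M := le_max_right _ _
  have hMt : t ≤ M := le_max_left _ _
  have hM0 : (0:ℝ) < M := by linarith
  have hMa1 : (1:ℝ) ≤ M ^ a := Real.one_le_rpow hM1 ha0.le
  -- the summable bound sequence for ‖mlTerm' k τ‖ / τ^(a-1)
  set e : ℕ → ℝ := fun k => a * k * (‖ζ‖ * M ^ a) ^ k / Real.Gamma (a * k + 1) with he_def
  have he_nonneg : ∀ k, 0 ≤ e k := by
    intro k
    have := (hΓpos _ (by positivity : (0:ℝ) < a * k + 1)).le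
    positivity
  have he_sum : Summable e := by
    apply Summable.of_nonneg_of_le he_nonneg _ ((summable_master ha0 ha1
      (R := ‖ζ‖ * M ^ a) (by positivity)).mul_left a)
    intro k
    simp only [he_def]
    have hΓ := hΓpos _ (by positivity : (0:ℝ) < a * k + 1)
    rw [mul_assoc, ← mul_div_assoc]
    apply div_le_div₀ (by positivity) _ hΓ le_rfl
    apply mul_le_mul_of_nonneg_left _ ha0.le
    apply mul_le_mul_of_nonneg_right (by linarith) (by positivity)
  set Cb : ℝ := ∑' k, e k with hCb_def
  have hCb0 : 0 ≤ Cb := tsum_nonneg he_nonneg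
  -- termwise bound for mlTerm' on (0, t)
  have hterm : ∀ (τ : ℝ), 0 < τ → τ < t → ∀ k, ‖mlTerm' a ζ k τ‖ ≤ τ ^ (a-1) * e k := by
    intro τ hτ0 hτt k
    rcases k with _ | k
    · rw [norm_mlTerm' a ha0 ζ 0 hτ0]
      simp [he_def]
    · rw [norm_mlTerm' a ha0 ζ (k+1) hτ0]
      simp only [he_def]
      have hΓ := hΓpos _ (by positivity : (0:ℝ) < a * (k+1 : ℕ) + 1)
      rw [← mul_div_assoc]
      apply div_le_div₀ (by positivity) _ hΓ le_rfl
      have hsplit : τ ^ (a * ((k:ℕ)+1:ℕ) - 1) = τ ^ (a-1) * τ ^ (a * k) := by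
        rw [← Real.rpow_add hτ0]
        congr 1
        push_cast
        ring
      rw [hsplit]
      have h1 : τ ^ (a * (k:ℝ)) ≤ (M ^ a) ^ k := by
        have : τ ^ (a * (k:ℝ)) ≤ M ^ (a * (k:ℝ)) :=
          Real.rpow_le_rpow hτ0.le (by linarith) (by positivity)
        rwa [Real.rpow_mul hM0.le, Real.rpow_natCast] at this
      have h2 : ‖ζ‖ ^ (k+1) * (M ^ a) ^ k ≤ (‖ζ‖ * M ^ a) ^ (k+1) := by
        rw [mul_pow]
        have : ((M:ℝ) ^ a) ^ k ≤ (M ^ a) ^ (k+1) := by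
          apply pow_le_pow_right₀ hMa1 (by linarith)
        apply mul_le_mul_of_nonneg_left this (by positivity)
      calc ‖ζ‖ ^ (k+1) * (a * ((k:ℕ)+1:ℕ) * (τ ^ (a-1) * τ ^ (a * (k:ℝ))))
          ≤ ‖ζ‖ ^ (k+1) * (a * ((k:ℕ)+1:ℕ) * (τ ^ (a-1) * (M ^ a) ^ k)) := by
            apply mul_le_mul_of_nonneg_left _ (by positivity)
            apply mul_le_mul_of_nonneg_left _ (by positivity)
            apply mul_le_mul_of_nonneg_left h1 (by positivity)
        _ = (a * ((k:ℕ)+1:ℕ)) * (‖ζ‖ ^ (k+1) * (M ^ a) ^ k) * τ ^ (a-1) := by ring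
        _ ≤ (a * ((k:ℕ)+1:ℕ)) * (‖ζ‖ * M ^ a) ^ (k+1) * τ ^ (a-1) := by
            apply mul_le_mul_of_nonneg_right _ (by positivity)
            apply mul_le_mul_of_nonneg_left h2 (by positivity)
        _ = τ ^ (a-1) * (a * ((k:ℕ)+1:ℕ) * (‖ζ‖ * M ^ a) ^ (k+1)) := by ring
  have hsum_norm_mlTerm' : ∀ (τ : ℝ), 0 < τ → Summable (fun k => ‖mlTerm' a ζ k τ‖) := by
    intro τ hτ0
    apply Summable.of_nonneg_of_le (fun k => norm_nonneg _) _
      ((summable_master ha0 ha1 (R := ‖ζ‖ * τ ^ a) (by positivity)).mul_left (a / τ))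
    intro k
    rw [norm_mlTerm' a ha0 ζ k hτ0, ← mul_div_assoc]
    have hΓ := hΓpos _ (by positivity : (0:ℝ) < a * k + 1)
    apply div_le_div₀ (by positivity) _ hΓ le_rfl
    have h1 : τ ^ (a * (k:ℝ) - 1) = (τ ^ a) ^ k / τ := by
      rw [Real.rpow_sub_one hτ0.ne', Real.rpow_mul hτ0.le, Real.rpow_natCast]
    rw [h1, mul_pow]
    have h2 : ‖ζ‖ ^ k * (a * (k:ℝ) * ((τ ^ a) ^ k / τ))
        = a * ((k:ℝ) * (‖ζ‖ ^ k * (τ ^ a) ^ k)) / τ := by ring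
    have h3 : a / τ * (((k:ℝ) + 1) * (‖ζ‖ ^ k * (τ ^ a) ^ k))
        = a * (((k:ℝ) + 1) * (‖ζ‖ ^ k * (τ ^ a) ^ k)) / τ := by ring
    rw [h2, h3]
    apply div_le_div₀ (by positivity) _ hτ0 le_rfl
    apply mul_le_mul_of_nonneg_left _ ha0.le
    apply mul_le_mul_of_nonneg_right (by linarith) (by positivity)
  have hbd : ∀ (τ : ℝ), 0 < τ → τ < t →
      ‖deriv (fun s : ℝ => mittagLeffler a 1 (ζ * ((s ^ a : ℝ) : ℂ))) τ‖ ≤ τ ^ (a-1) * Cb := by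
    intro τ hτ0 hτt
    rw [hderiv τ hτ0]
    calc ‖∑' k, mlTerm' a ζ k τ‖ ≤ ∑' k, ‖mlTerm' a ζ k τ‖ :=
          norm_tsum_le_tsum_norm (hsum_norm_mlTerm' τ hτ0)
      _ ≤ ∑' k, τ ^ (a-1) * e k := by
          apply Summable.tsum_le_tsum (fun k => hterm τ hτ0 hτt k) (hsum_norm_mlTerm' τ hτ0)
            (he_sum.mul_left _)
      _ = τ ^ (a-1) * Cb := by rw [tsum_mul_left]
  -- measurability of the full integrand
  have hmeas : AEStronglyMeasurable
      (fun τ : ℝ => (((t - τ) ^ (-a) : ℝ) : ℂ) *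
        deriv (fun s : ℝ => mittagLeffler a 1 (ζ * ((s ^ a : ℝ) : ℂ))) τ)
      (volume.restrict (Set.Ioo 0 t)) := by
    apply Measurable.aestronglyMeasurable
    apply Measurable.mul
    · exact Complex.measurable_ofReal.comp (by fun_prop)
    · exact measurable_deriv _
  -- integrability of the full integrand
  have hint : MeasureTheory.IntegrableOn
      (fun τ : ℝ => (((t - τ) ^ (-a) : ℝ) : ℂ) *
        deriv (fun s : ℝ => mittagLeffler a 1 (ζ * ((s ^ a : ℝ) : ℂ))) τ) (Set.Ioo 0 t) := by
    apply Integrable.mono' (((beta_integrable (p := a) ha0 ht ha0 ha1).const_mul Cb)) hmeas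
    filter_upwards [ae_restrict_mem measurableSet_Ioo] with τ hτ
    rw [norm_mul, Complex.norm_real, Real.norm_eq_abs,
      abs_of_nonneg (Real.rpow_nonneg (by linarith [hτ.2] : (0:ℝ) ≤ t - τ) _)]
    calc (t - τ) ^ (-a) * ‖deriv (fun s : ℝ => mittagLeffler a 1 (ζ * ((s ^ a : ℝ) : ℂ))) τ‖
        ≤ (t - τ) ^ (-a) * (τ ^ (a-1) * Cb) := by
          apply mul_le_mul_of_nonneg_left (hbd τ hτ.1 hτ.2)
            (Real.rpow_nonneg (by linarith [hτ.2]) _)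
      _ = Cb * (τ ^ (a-1) * (t - τ) ^ (-a)) := by ring
  refine ⟨hint, ?_⟩
  -- the termwise integrand
  set F : ℕ → ℝ → ℂ := fun k τ => (((t - τ) ^ (-a) : ℝ) : ℂ) * mlTerm' a ζ k τ with hF_def
  have hc : ∀ (k : ℕ) (τ : ℝ), F k τ =
      (ζ ^ k * ((a * k : ℝ) : ℂ) / ((Real.Gamma (a * k + 1) : ℝ) : ℂ)) *
        ((τ ^ (a * k - 1) * (t - τ) ^ (-a) : ℝ) : ℂ) := by
    intro k τ
    simp only [hF_def, mlTerm']
    push_cast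
    ring
  have hF0 : F 0 = fun _ => 0 := by
    funext τ
    rw [hc]
    norm_num
  have hp1 : ∀ k : ℕ, (0:ℝ) < a * ((k+1 : ℕ) : ℝ) := by
    intro k
    have : (0:ℝ) < ((k+1 : ℕ) : ℝ) := by exact_mod_cast Nat.succ_pos k
    positivity
  have hFint : ∀ k : ℕ, Integrable (F k) (volume.restrict (Set.Ioo 0 t)) := by
    intro k
    rcases k with _ | k
    · rw [hF0]
      exact integrable_zero _ _ _
    · have hfe : F (k+1) = fun τ : ℝ =>
          (ζ ^ (k+1) * ((a * ((k+1:ℕ):ℝ) : ℝ) : ℂ) / ((Real.Gamma (a * ((k+1:ℕ):ℝ) + 1) : ℝ) : ℂ)) *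
            ((τ ^ (a * ((k+1:ℕ):ℝ) - 1) * (t - τ) ^ (-a) : ℝ) : ℂ) := funext (hc (k+1))
      rw [hfe]
      exact ((beta_integrable (p := a * ((k+1:ℕ):ℝ)) (hp1 k) ht ha0 ha1).ofReal).const_mul _
  have hnorm_eq : ∀ k : ℕ, (∫ τ in Set.Ioo (0:ℝ) t, ‖F k τ‖)
      = ‖ζ ^ k * ((a * k : ℝ) : ℂ) / ((Real.Gamma (a * k + 1) : ℝ) : ℂ)‖ *
        ∫ τ in Set.Ioo (0:ℝ) t, τ ^ (a * k - 1) * (t - τ) ^ (-a) := by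
    intro k
    rw [← MeasureTheory.integral_const_mul]
    apply setIntegral_congr_fun measurableSet_Ioo
    intro τ hτ
    dsimp only
    rw [hc k τ, norm_mul, Complex.norm_real, Real.norm_eq_abs,
      abs_of_nonneg (mul_nonneg (Real.rpow_nonneg hτ.1.le _)
        (Real.rpow_nonneg (by linarith [hτ.2] : (0:ℝ) ≤ t - τ) _))]
  have hnormc : ∀ k : ℕ, ‖ζ ^ k * ((a * k : ℝ) : ℂ) / ((Real.Gamma (a * k + 1) : ℝ) : ℂ)‖
      = ‖ζ‖ ^ k * (a * k) / Real.Gamma (a * k + 1) := by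
    intro k
    rw [norm_div, norm_mul, norm_pow, Complex.norm_real, Complex.norm_real,
      Real.norm_eq_abs, Real.norm_eq_abs, abs_of_nonneg (by positivity : (0:ℝ) ≤ a * k),
      abs_of_nonneg (hΓpos _ (by positivity)).le]
  have hsum_int_norm : Summable (fun k => ∫ τ in Set.Ioo (0:ℝ) t, ‖F k τ‖) := by
    rw [← summable_nat_add_iff 1]
    apply Summable.of_nonneg_of_le
      (fun k => integral_nonneg (fun τ => norm_nonneg _)) _
      ((summable_master ha0 ha1 (R := ‖ζ‖ * t ^ a) (by positivity)).mul_left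
        (Real.Gamma (1-a) * ‖ζ‖))
    intro k
    rw [hnorm_eq (k+1), hnormc (k+1),
      beta_value (p := a * ((k+1:ℕ):ℝ)) (hp1 k) ht ha0 ha1]
    have e1 : a * ((k+1:ℕ):ℝ) + 1 - a = a * (k:ℝ) + 1 := by push_cast; ring
    have e2 : a * ((k+1:ℕ):ℝ) - a = a * (k:ℝ) := by push_cast; ring
    have e3 : Real.Gamma (a * ((k+1:ℕ):ℝ) + 1)
        = (a * ((k+1:ℕ):ℝ)) * Real.Gamma (a * ((k+1:ℕ):ℝ)) := Real.Gamma_add_one (hp1 k).ne'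
    have e4 : t ^ (a * (k:ℝ)) = (t ^ a) ^ k := by
      rw [Real.rpow_mul ht.le, Real.rpow_natCast]
    rw [e1, e2, e3, e4]
    have hG1 : (0:ℝ) < Real.Gamma (a * ((k+1:ℕ):ℝ)) := hΓpos _ (hp1 k)
    have hG2 : (0:ℝ) < Real.Gamma (a * (k:ℝ) + 1) := hΓpos _ (by positivity)
    have hG3 : (0:ℝ) < Real.Gamma (1-a) := hΓpos _ h1a
    calc ‖ζ‖ ^ (k+1) * (a * ((k+1:ℕ):ℝ)) / ((a * ((k+1:ℕ):ℝ)) * Real.Gamma (a * ((k+1:ℕ):ℝ))) *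
          (Real.Gamma (a * ((k+1:ℕ):ℝ)) * Real.Gamma (1-a) / Real.Gamma (a * (k:ℝ) + 1) *
            (t ^ a) ^ k)
        = Real.Gamma (1-a) * ‖ζ‖ * ((‖ζ‖ * t ^ a) ^ k / Real.Gamma (a * (k:ℝ) + 1)) := by
          rw [mul_pow]
          field_simp
          ring
      _ ≤ Real.Gamma (1-a) * ‖ζ‖ * (((k:ℝ) + 1) * (‖ζ‖ * t ^ a) ^ k /
            Real.Gamma (a * (k:ℝ) + 1)) := by
          apply mul_le_mul_of_nonneg_left _ (by positivity)
          apply div_le_div₀ (by positivity) _ hG2 le_rfl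
          nlinarith [pow_nonneg (mul_nonneg (norm_nonneg ζ) (Real.rpow_nonneg ht.le a)) k,
            Nat.cast_nonneg (α := ℝ) k]
  have key : (∫ τ in Set.Ioo (0:ℝ) t, (((t - τ) ^ (-a) : ℝ) : ℂ) *
        deriv (fun s : ℝ => mittagLeffler a 1 (ζ * ((s ^ a : ℝ) : ℂ))) τ)
      = ∑' k, ∫ τ in Set.Ioo (0:ℝ) t, F k τ := by
    have h1 : (∫ τ in Set.Ioo (0:ℝ) t, (((t - τ) ^ (-a) : ℝ) : ℂ) *
          deriv (fun s : ℝ => mittagLeffler a 1 (ζ * ((s ^ a : ℝ) : ℂ))) τ)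
        = ∫ τ in Set.Ioo (0:ℝ) t, ∑' k, F k τ := by
      apply setIntegral_congr_fun measurableSet_Ioo
      intro τ hτ
      dsimp only
      rw [hderiv τ hτ.1]
      simp only [hF_def]
      exact (tsum_mul_left).symm
    exact h1.trans (integral_tsum_of_summable_integral_norm hFint hsum_int_norm).symm
  have hsummable_int : Summable (fun k => ∫ τ in Set.Ioo (0:ℝ) t, F k τ) :=
    Summable.of_norm_bounded hsum_int_norm (fun k => norm_integral_le_integral_norm _)
  have hval : ∀ k : ℕ, (∫ τ in Set.Ioo (0:ℝ) t, F (k+1) τ)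
      = ((Real.Gamma (1-a) : ℝ) : ℂ) * ζ *
        ((ζ * ((t ^ a : ℝ) : ℂ)) ^ k / ((Real.Gamma (a * k + 1) : ℝ) : ℂ)) := by
    intro k
    have hfe : F (k+1) = fun τ : ℝ =>
        (ζ ^ (k+1) * ((a * ((k+1:ℕ):ℝ) : ℝ) : ℂ) / ((Real.Gamma (a * ((k+1:ℕ):ℝ) + 1) : ℝ) : ℂ)) *
          ((τ ^ (a * ((k+1:ℕ):ℝ) - 1) * (t - τ) ^ (-a) : ℝ) : ℂ) := funext (hc (k+1))
    rw [hfe, MeasureTheory.integral_const_mul]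
    have hio : (∫ τ in Set.Ioo (0:ℝ) t, ((τ ^ (a * ((k+1:ℕ):ℝ) - 1) * (t - τ) ^ (-a) : ℝ) : ℂ))
        = ((∫ τ in Set.Ioo (0:ℝ) t, τ ^ (a * ((k+1:ℕ):ℝ) - 1) * (t - τ) ^ (-a) : ℝ) : ℂ) :=
      integral_ofReal
    rw [hio, beta_value (p := a * ((k+1:ℕ):ℝ)) (hp1 k) ht ha0 ha1]
    have e1 : a * ((k+1:ℕ):ℝ) + 1 - a = a * (k:ℝ) + 1 := by push_cast; ring
    have e2 : a * ((k+1:ℕ):ℝ) - a = a * (k:ℝ) := by push_cast; ring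
    have e3 : Real.Gamma (a * ((k+1:ℕ):ℝ) + 1)
        = (a * ((k+1:ℕ):ℝ)) * Real.Gamma (a * ((k+1:ℕ):ℝ)) := Real.Gamma_add_one (hp1 k).ne'
    have e4 : t ^ (a * (k:ℝ)) = (t ^ a) ^ k := by
      rw [Real.rpow_mul ht.le, Real.rpow_natCast]
    rw [e1, e2, e3, e4]
    have hG1 : ((Real.Gamma (a * ((k+1:ℕ):ℝ)) : ℝ) : ℂ) ≠ 0 :=
      Complex.ofReal_ne_zero.mpr (hΓpos _ (hp1 k)).ne'
    have hG2 : ((Real.Gamma (a * (k:ℝ) + 1) : ℝ) : ℂ) ≠ 0 :=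
      Complex.ofReal_ne_zero.mpr (hΓpos _ (by positivity)).ne'
    have hak : ((a * ((k+1:ℕ):ℝ) : ℝ) : ℂ) ≠ 0 :=
      Complex.ofReal_ne_zero.mpr (hp1 k).ne'
    have hcoef : ζ ^ (k+1) * ((a * ((k+1:ℕ):ℝ) : ℝ) : ℂ) /
          (((a * ((k+1:ℕ):ℝ) : ℝ) : ℂ) * ((Real.Gamma (a * ((k+1:ℕ):ℝ)) : ℝ) : ℂ))
        = ζ ^ (k+1) / ((Real.Gamma (a * ((k+1:ℕ):ℝ)) : ℝ) : ℂ) := by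
      rw [div_eq_div_iff (mul_ne_zero hak hG1) hG1]
      ring
    rw [Complex.ofReal_mul (a * ((k+1:ℕ):ℝ)) (Real.Gamma (a * ((k+1:ℕ):ℝ))), hcoef,
      Complex.ofReal_mul (Real.Gamma (a * ((k+1:ℕ):ℝ)) * Real.Gamma (1-a) /
        Real.Gamma (a * (k:ℝ) + 1)) ((t ^ a) ^ k),
      Complex.ofReal_div,
      Complex.ofReal_mul (Real.Gamma (a * ((k+1:ℕ):ℝ))) (Real.Gamma (1-a)),
      Complex.ofReal_pow, mul_pow]
    rw [show ζ ^ (k+1) / ((Real.Gamma (a * ((k+1:ℕ):ℝ)) : ℝ) : ℂ) *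
          (((Real.Gamma (a * ((k+1:ℕ):ℝ)) : ℝ) : ℂ) * ((Real.Gamma (1-a) : ℝ) : ℂ) /
            ((Real.Gamma (a * (k:ℝ) + 1) : ℝ) : ℂ) * (((t ^ a : ℝ) : ℂ)) ^ k)
        = (((Real.Gamma (a * ((k+1:ℕ):ℝ)) : ℝ) : ℂ) / ((Real.Gamma (a * ((k+1:ℕ):ℝ)) : ℝ) : ℂ)) *
          (ζ ^ (k+1) * ((Real.Gamma (1-a) : ℝ) : ℂ) * (((t ^ a : ℝ) : ℂ)) ^ k /
            ((Real.Gamma (a * (k:ℝ) + 1) : ℝ) : ℂ)) from by ring,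
      div_self hG1, one_mul]
    ring
  have hF0int : (∫ τ in Set.Ioo (0:ℝ) t, F 0 τ) = 0 := by
    rw [hF0]
    simp
  have hΓ1a : (Real.Gamma (1-a) : ℂ) ≠ 0 :=
    Complex.ofReal_ne_zero.mpr (hΓpos _ h1a).ne'
  rw [key, Summable.tsum_eq_zero_add hsummable_int, hF0int, zero_add]
  have hshift : (∑' k, ∫ τ in Set.Ioo (0:ℝ) t, F (k+1) τ)
      = (((Real.Gamma (1-a) : ℝ) : ℂ) * ζ) * mittagLeffler a 1 (ζ * ((t ^ a : ℝ) : ℂ)) := by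
    rw [tsum_congr hval]
    exact tsum_mul_left
  rw [hshift]
  field_simp
end

section
/- Let 0 < α < 1, ζ ∈ ℂ, and t > 0. Then the Riemann–Liouville fractional integral of order 1−α of the function s ↦ s^{α−1} E_{α,α}(ζ s^α) satisfies (1/Γ(1−α)) ∫₀^t (t−s)^{−α} s^{α−1} E_{α,α}(ζ s^α) ds = E_{α,1}(ζ t^α). -/
open MeasureTheory Real Set Filter


lemma gamma_ratio {x c : ℝ} (hx : 1 < x) (hc : 0 < c) :
    Real.Gamma x * (x - 1) ^ c ≤ Real.Gamma (x + c) := by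
  have hx0 : (0:ℝ) < x := by linarith
  have hx1 : (0:ℝ) < x - 1 := by linarith
  have h := Real.convexOn_log_Gamma.slope_mono_adjacent (x := x - 1) (y := x) (z := x + c)
    (by simpa using hx1) (by simp; linarith) (by linarith) (by linarith)
  simp only [Function.comp] at h
  have hG : Real.Gamma x = (x - 1) * Real.Gamma (x - 1) := by
    have := Real.Gamma_add_one hx1.ne'
    simpa using this
  have hGpos : 0 < Real.Gamma (x - 1) := Real.Gamma_pos_of_pos hx1
  have hGxpos : 0 < Real.Gamma x := Real.Gamma_pos_of_pos hx0
  have hlhs : (Real.log (Real.Gamma x) - Real.log (Real.Gamma (x-1))) / (x - (x-1))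
      = Real.log (x - 1) := by
    rw [hG, Real.log_mul hx1.ne' hGpos.ne']
    field_simp
    ring
  rw [hlhs] at h
  have h3 : Real.log (Real.Gamma x) + c * Real.log (x - 1) ≤ Real.log (Real.Gamma (x + c)) := by
    rw [le_div_iff₀ (by linarith : (0:ℝ) < x + c - x)] at h
    nlinarith [h]
  have := Real.exp_le_exp.mpr h3
  rwa [Real.exp_add, Real.exp_log hGxpos, Real.exp_log (Real.Gamma_pos_of_pos (by linarith)),
    mul_comm c, ← Real.rpow_def_of_pos hx1] at this

lemma summable_ml (a b : ℝ) (ha : 0 < a) (hb : 0 < b) {r : ℝ} (hr : 0 ≤ r) :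
    Summable (fun k : ℕ => r ^ k / Real.Gamma (a * k + b)) := by
  apply summable_of_ratio_norm_eventually_le (r := 1/2) (by norm_num)
  have htend : Tendsto (fun k : ℕ => (a * k + b - 1)) atTop atTop := by
    have he : (fun k : ℕ => a * (k:ℝ) + b - 1) = fun k : ℕ => a * k + (b - 1) := by
      funext k; ring
    rw [he]
    exact tendsto_atTop_add_const_right _ _ ((tendsto_natCast_atTop_atTop (R := ℝ)).const_mul_atTop ha)
  have h1 : ∀ᶠ k : ℕ in atTop, (1:ℝ) < a * k + b := (htend.eventually_ge_atTop 1).mono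
    (fun k hk => by linarith)
  have h2 : ∀ᶠ k : ℕ in atTop, (2 * r + 1 : ℝ) ≤ (a * k + b - 1) ^ a := by
    have : Tendsto (fun k : ℕ => (a * k + b - 1) ^ a) atTop atTop :=
      (tendsto_rpow_atTop ha).comp htend
    exact this.eventually_ge_atTop _
  filter_upwards [h1, h2] with k hk1 hk2
  have hGk : 0 < Real.Gamma (a * k + b) := Real.Gamma_pos_of_pos (by linarith)
  have hGk1 : 0 < Real.Gamma (a * (k+1) + b) := Real.Gamma_pos_of_pos (by push_cast; nlinarith)
  have key : Real.Gamma (a * k + b) * (a * k + b - 1) ^ a ≤ Real.Gamma (a * (k+1) + b) := by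
    have := gamma_ratio (x := a * k + b) (c := a) hk1 ha
    have he : a * k + b + a = a * (k + 1) + b := by push_cast; ring
    rwa [he] at this
  push_cast
  rw [Real.norm_eq_abs, Real.norm_eq_abs, abs_of_nonneg (by positivity),
    abs_of_nonneg (by positivity), mul_div_assoc', div_le_div_iff₀ hGk1 (by positivity)]
  calc r ^ (k+1) * Real.Gamma (a * (k:ℝ) + b) = r * (r ^ k * Real.Gamma (a * k + b)) := by ring
    _ ≤ (1/2) * ((2*r+1) * (r ^ k * Real.Gamma (a * k + b))) := by nlinarith [pow_nonneg hr k, hGk.le, mul_nonneg (pow_nonneg hr k) hGk.le]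
    _ ≤ (1/2) * ((a * k + b - 1) ^ a * (r ^ k * Real.Gamma (a * k + b))) := by
        have : (0:ℝ) ≤ r ^ k * Real.Gamma (a * k + b) := by positivity
        nlinarith
    _ = 1 / 2 * r ^ k * (Real.Gamma (a * k + b) * (a * k + b - 1) ^ a) := by ring
    _ ≤ 1 / 2 * r ^ k * Real.Gamma (a * (k+1) + b) := by
        have : (0:ℝ) ≤ 1/2 * r ^ k := by positivity
        nlinarith


lemma beta_integrable_s14 {a c t : ℝ} (ha0 : 0 < a) (ha1 : a < 1) (hc : 0 < c) (ht : 0 < t) :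
    IntegrableOn (fun s : ℝ => (t - s) ^ (-a) * s ^ (c - 1)) (Ioo 0 t) := by
  have h1 : IntervalIntegrable (fun s : ℝ => (t - s) ^ (-a) * s ^ (c - 1)) volume 0 (t/2) := by
    have hi : IntervalIntegrable (fun s : ℝ => s ^ (c - 1)) volume 0 (t/2) :=
      intervalIntegral.intervalIntegrable_rpow' (by linarith)
    apply hi.continuousOn_mul (g := fun s : ℝ => (t - s) ^ (-a))
    · apply ContinuousOn.rpow_const
      · exact (continuous_const.sub continuous_id).continuousOn
      · intro x hx
        rw [uIcc_of_le (by linarith)] at hx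
        left; intro h; have := hx.2; rw [sub_eq_zero] at h; linarith [hx.2]
  have h2 : IntervalIntegrable (fun s : ℝ => (t - s) ^ (-a) * s ^ (c - 1)) volume (t/2) t := by
    have hi : IntervalIntegrable (fun s : ℝ => s ^ (-a)) volume (t/2) 0 :=
      intervalIntegral.intervalIntegrable_rpow' (by linarith)
    have hi2 : IntervalIntegrable (fun s : ℝ => (t - s) ^ (-a)) volume (t - (t/2)) (t - 0) :=
      hi.comp_sub_left t
    have hi3 : IntervalIntegrable (fun s : ℝ => (t - s) ^ (-a)) volume (t/2) t := by
      have h0 : t - t / 2 = t / 2 := by ring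
      rw [h0, sub_zero] at hi2
      exact hi2
    apply hi3.mul_continuousOn
    apply ContinuousOn.rpow_const continuous_id.continuousOn
    intro x hx
    rw [uIcc_of_le (by linarith)] at hx
    left; intro h; simp only [id] at h; rw [h] at hx; linarith [hx.1]
  have := (h1.trans h2)
  rw [intervalIntegrable_iff_integrableOn_Ioo_of_le ht.le] at this
  exact this

lemma beta_value_s14 {a c t : ℝ} (ha0 : 0 < a) (ha1 : a < 1) (hc : 0 < c) (ht : 0 < t) :
    ∫ s in Ioo (0:ℝ) t, (t - s) ^ (-a) * s ^ (c - 1)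
      = Real.Gamma (1 - a) * Real.Gamma c / Real.Gamma (1 - a + c) * t ^ (c - a) := by
  have hsc := Complex.betaIntegral_scaled (c : ℂ) ((1 : ℂ) - a) ht
  have hB : Complex.betaIntegral (c : ℂ) ((1:ℂ) - a)
      = Real.Gamma c * Real.Gamma (1 - a) / Real.Gamma (c + (1 - a)) := by
    have hre1 : 0 < ((c:ℂ)).re := by simpa using hc
    have hre2 : 0 < ((1:ℂ) - a).re := by simp; linarith
    have := Complex.Gamma_mul_Gamma_eq_betaIntegral hre1 hre2
    have hc1 : ((1:ℂ) - (a:ℂ)) = ((1 - a : ℝ) : ℂ) := by push_cast; ring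
    have hcc : (c:ℂ) + ((1 - a : ℝ) : ℂ) = ((c + (1 - a) : ℝ) : ℂ) := by push_cast; ring
    rw [hc1] at this ⊢
    rw [hcc, Complex.Gamma_ofReal, Complex.Gamma_ofReal, Complex.Gamma_ofReal] at this
    have hne : ((Real.Gamma (c + (1 - a)) : ℂ)) ≠ 0 := by
      simpa using (Real.Gamma_pos_of_pos (by linarith : (0:ℝ) < c + (1 - a))).ne'
    field_simp at this ⊢
    rw [this]
  have key : ∫ s in Ioo (0:ℝ) t, (((t - s) ^ (-a) * s ^ (c - 1) : ℝ) : ℂ)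
      = ((Real.Gamma (1 - a) * Real.Gamma c / Real.Gamma (1 - a + c) * t ^ (c - a) : ℝ) : ℂ) := by
    have h1 : ∫ s in Ioo (0:ℝ) t, (((t - s) ^ (-a) * s ^ (c - 1) : ℝ) : ℂ)
        = ∫ x in (0:ℝ)..t, (x:ℂ) ^ ((c:ℂ) - 1) * ((t:ℂ) - x) ^ ((1:ℂ) - a - 1) := by
      rw [intervalIntegral.integral_of_le ht.le, integral_Ioc_eq_integral_Ioo]
      apply setIntegral_congr_fun measurableSet_Ioo
      intro x hx
      obtain ⟨hx0, hxt⟩ := hx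
      have e1 : ((c:ℂ) - 1) = ((c - 1 : ℝ) : ℂ) := by push_cast; ring
      have e2 : ((1:ℂ) - a - 1) = ((-a : ℝ) : ℂ) := by push_cast; ring
      have e3 : ((t:ℂ) - (x:ℂ)) = ((t - x : ℝ) : ℂ) := by push_cast; ring
      show ((((t - x) ^ (-a) * x ^ (c - 1) : ℝ)) : ℂ) = (x:ℂ) ^ ((c:ℂ) - 1) * ((t:ℂ) - (x:ℂ)) ^ ((1:ℂ) - (a:ℂ) - 1)
      rw [e1, e2, e3, ← Complex.ofReal_cpow (by linarith : (0:ℝ) ≤ t - x) (-a),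
        ← Complex.ofReal_cpow hx0.le (c - 1), ← Complex.ofReal_mul,
        Complex.ofReal_inj, mul_comm]

    rw [h1, hsc, hB]
    have e4 : ((c:ℂ) + (1 - (a:ℂ)) - 1) = ((c - a : ℝ) : ℂ) := by push_cast; ring
    rw [e4, ← Complex.ofReal_cpow ht.le (c - a)]
    have e5 : (c + (1 - a)) = (1 - a + c) := by ring
    rw [e5]
    push_cast
    ring
  apply Complex.ofReal_injective
  rw [← key]
  exact (_root_.integral_ofReal (𝕜 := ℂ)).symm

lemma summable_ml' (a b : ℝ) (ha : 0 < a) (hb : 0 < b) (w : ℂ) :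
    Summable (fun k : ℕ => w ^ k / (Real.Gamma (a * k + b) : ℂ)) := by
  apply Summable.of_norm
  have h := summable_ml a b ha hb (norm_nonneg w)
  convert h using 2 with k
  rw [norm_div, norm_pow, Complex.norm_real, Real.norm_eq_abs,
    abs_of_pos (Real.Gamma_pos_of_pos (by positivity : (0:ℝ) < a * k + b))]

/-- For `0 < α < 1`, `ζ ∈ ℂ` and `t > 0`, the Riemann–Liouville fractional integral of
order `1 − α` of `s ↦ s^{α−1} E_{α,α}(ζ s^α)` equals `E_{α,1}(ζ t^α)`:
`(1/Γ(1−α)) ∫₀^t (t−s)^{−α} s^{α−1} E_{α,α}(ζ s^α) ds = E_{α,1}(ζ t^α)`. -/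
theorem riemann_liouville_integral_mittagLeffler
    (a : ℝ) (ha0 : 0 < a) (ha1 : a < 1) (ζ : ℂ) (t : ℝ) (ht : 0 < t) :
    MeasureTheory.IntegrableOn
      (fun s : ℝ => (((t - s) ^ (-a) : ℝ) : ℂ) * (((s ^ (a - 1) : ℝ) : ℂ) *
        mittagLeffler a a (ζ * ((s ^ a : ℝ) : ℂ))))
      (Set.Ioo 0 t) ∧
    (1 / (Real.Gamma (1 - a) : ℂ)) *
        ∫ s in Set.Ioo (0 : ℝ) t, (((t - s) ^ (-a) : ℝ) : ℂ) * (((s ^ (a - 1) : ℝ) : ℂ) *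
          mittagLeffler a a (ζ * ((s ^ a : ℝ) : ℂ)))
      = mittagLeffler a 1 (ζ * ((t ^ a : ℝ) : ℂ)) := by
  have hG1a : 0 < Real.Gamma (1 - a) := Real.Gamma_pos_of_pos (by linarith)
  have hGa : ∀ k : ℕ, 0 < Real.Gamma (a * k + a) :=
    fun k => Real.Gamma_pos_of_pos (by positivity)
  set r : ℝ := ‖ζ‖ * t ^ a with hrdef
  have hr0 : 0 ≤ r := by positivity
  set F : ℝ → ℂ := fun s => (((t - s) ^ (-a) : ℝ) : ℂ) * (((s ^ (a - 1) : ℝ) : ℂ) *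
    mittagLeffler a a (ζ * ((s ^ a : ℝ) : ℂ))) with hF
  set g : ℕ → ℝ → ℂ := fun k s => (((t - s) ^ (-a) : ℝ) : ℂ) * ((((s ^ (a - 1) : ℝ)) : ℂ) *
    (ζ ^ k * ((((s ^ a : ℝ)) : ℂ)) ^ k / ((Real.Gamma (a * k + a) : ℝ) : ℂ))) with hgdef
  -- pointwise expansion
  have hFg : ∀ s : ℝ, F s = ∑' k : ℕ, g k s := by
    intro s
    rw [hF, hgdef]
    simp only [mittagLeffler, mul_pow, mul_div_assoc]
    rw [← tsum_mul_left, ← tsum_mul_left]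
  -- measurability
  have hgm : ∀ k, Measurable (g k) := by
    intro k
    apply Measurable.mul
    · fun_prop
    · apply Measurable.mul
      · fun_prop
      · apply Measurable.div _ measurable_const
        apply Measurable.mul measurable_const
        apply Measurable.pow _ measurable_const
        fun_prop
  have hFm : Measurable F := by
    have : ∀ s, Tendsto (fun n => ∑ k ∈ Finset.range n, g k s) atTop (nhds (F s)) := by
      intro s
      rw [hFg s]
      have hsummable : Summable (fun k => g k s) := by
        have h0 := summable_ml' a a ha0 ha0 (ζ * ((s ^ a : ℝ) : ℂ))
        simp only [hgdef, mul_pow, mul_div_assoc] at h0 ⊢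
        exact (h0.mul_left _).mul_left _
      exact hsummable.hasSum.tendsto_sum_nat
    exact measurable_of_tendsto_metrizable (fun n => by
      exact Finset.measurable_sum _ (fun k _ => hgm k)) (tendsto_pi_nhds.mpr this)
  -- rewrite of g k on Ioo
  have hk_eq : ∀ k : ℕ, ∀ s ∈ Ioo (0:ℝ) t,
      g k s = (ζ ^ k / ((Real.Gamma (a * k + a) : ℝ) : ℂ)) *
        (((t - s) ^ (-a) * s ^ (a * ((k:ℝ) + 1) - 1) : ℝ) : ℂ) := by
    intro k s hs
    have hs0 : (0:ℝ) < s := hs.1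
    have hpow : s ^ (a * ((k:ℝ) + 1) - 1) = s ^ (a - 1) * (s ^ a) ^ k := by
      rw [← Real.rpow_natCast (s ^ a) k, ← Real.rpow_mul hs0.le, ← Real.rpow_add hs0]
      congr 1; ring
    rw [hgdef]
    push_cast [hpow]
    ring
  have hc : ∀ k : ℕ, (0:ℝ) < a * ((k:ℝ) + 1) := fun k => by positivity
  have hint : ∀ k : ℕ, IntegrableOn (g k) (Ioo 0 t) := by
    intro k
    have hb := beta_integrable_s14 ha0 ha1 (hc k) ht
    have h2 : IntegrableOn (fun s : ℝ => (ζ ^ k / ((Real.Gamma (a * k + a) : ℝ) : ℂ)) *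
        (((t - s) ^ (-a) * s ^ (a * ((k:ℝ) + 1) - 1) : ℝ) : ℂ)) (Ioo 0 t) :=
      hb.ofReal.const_mul _
    exact h2.congr_fun (fun s hs => (hk_eq k s hs).symm) measurableSet_Ioo
  have hknorm : ∀ k : ℕ, ∀ s ∈ Ioo (0:ℝ) t, ‖g k s‖
      = (‖ζ‖ ^ k / Real.Gamma (a * k + a)) * ((t - s) ^ (-a) * s ^ (a * ((k:ℝ) + 1) - 1)) := by
    intro k s hs
    rw [hk_eq k s hs, norm_mul, norm_div, norm_pow, Complex.norm_real, Complex.norm_real,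
      Real.norm_eq_abs, Real.norm_eq_abs, abs_of_pos (hGa k), abs_of_nonneg
        (mul_nonneg (Real.rpow_nonneg (by linarith [hs.2]) _) (Real.rpow_nonneg hs.1.le _))]
  have htpow : ∀ k : ℕ, t ^ (a * (k:ℝ) + a - a) = (t ^ a) ^ k := by
    intro k
    have : a * (k:ℝ) + a - a = a * (k:ℝ) := by ring
    rw [this, Real.rpow_mul ht.le, Real.rpow_natCast]
  have hGsum : ∀ k : ℕ, (1 - a) + a * ((k:ℝ) + 1) = a * k + 1 := fun k => by ring
  have hGarg : ∀ k : ℕ, a * ((k:ℝ) + 1) = a * k + a := fun k => by ring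
  have hnormint : ∀ k : ℕ, ∫ s in Ioo (0:ℝ) t, ‖g k s‖
      = Real.Gamma (1 - a) * (r ^ k / Real.Gamma (a * k + 1)) := by
    intro k
    rw [setIntegral_congr_fun measurableSet_Ioo (fun s hs => hknorm k s hs),
      MeasureTheory.integral_const_mul, beta_value_s14 ha0 ha1 (hc k) ht, hGsum k, hGarg k, htpow k,
      hrdef]
    have h1 : Real.Gamma (a * k + a) ≠ 0 := (hGa k).ne'
    have h2 : Real.Gamma (a * k + 1) ≠ 0 :=
      (Real.Gamma_pos_of_pos (by positivity : (0:ℝ) < a * k + 1)).ne'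
    field_simp
    ring
  have hsumnorm : Summable (fun k : ℕ => ∫ s in Ioo (0:ℝ) t, ‖g k s‖) := by
    simp_rw [hnormint]
    exact (summable_ml a 1 ha0 one_pos hr0).mul_left _
  have hval : ∀ k : ℕ, ∫ s in Ioo (0:ℝ) t, g k s
      = ((Real.Gamma (1 - a) : ℝ) : ℂ) *
        ((ζ * ((t ^ a : ℝ) : ℂ)) ^ k / ((Real.Gamma (a * k + 1) : ℝ) : ℂ)) := by
    intro k
    rw [setIntegral_congr_fun measurableSet_Ioo (hk_eq k), MeasureTheory.integral_const_mul]
    have hio : ∫ s in Ioo (0:ℝ) t, ((((t - s) ^ (-a) * s ^ (a * ((k:ℝ)+1) - 1) : ℝ)) : ℂ)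
        = (((∫ s in Ioo (0:ℝ) t, (t - s) ^ (-a) * s ^ (a * ((k:ℝ)+1) - 1)) : ℝ) : ℂ) :=
      _root_.integral_ofReal (𝕜 := ℂ)
    rw [hio, beta_value_s14 ha0 ha1 (hc k) ht, hGsum k, hGarg k, htpow k]
    have h1 : ((Real.Gamma (a * k + a) : ℝ) : ℂ) ≠ 0 := by
      exact_mod_cast Complex.ofReal_ne_zero.mpr (hGa k).ne'
    have h2 : ((Real.Gamma (a * k + 1) : ℝ) : ℂ) ≠ 0 :=
      Complex.ofReal_ne_zero.mpr (Real.Gamma_pos_of_pos (by positivity : (0:ℝ) < a*k+1)).ne'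
    push_cast
    rw [mul_pow]
    field_simp
    ring_nf
    have h1' : ((Real.Gamma (a + a * k) : ℝ) : ℂ) ≠ 0 := by rwa [add_comm]
    linear_combination (ζ ^ k * ((Real.Gamma (1 - a) : ℝ) : ℂ) * ((t ^ a : ℝ) : ℂ) ^ k) * (mul_inv_cancel₀ h1')
  -- integrability of F
  have hCsum : Summable (fun k : ℕ => r ^ k / Real.Gamma (a * k + a)) :=
    summable_ml a a ha0 ha0 hr0
  have hFint : IntegrableOn F (Ioo 0 t) := by
    set C : ℝ := ∑' k : ℕ, r ^ k / Real.Gamma (a * k + a) with hC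
    apply Integrable.mono' ((beta_integrable_s14 ha0 ha1 ha0 ht).const_mul C)
      (hFm.aestronglyMeasurable)
    filter_upwards [ae_restrict_mem measurableSet_Ioo] with s hs
    have hs0 : (0:ℝ) < s := hs.1
    have hA : (0:ℝ) ≤ (t - s) ^ (-a) := Real.rpow_nonneg (by linarith [hs.2]) _
    have hB : (0:ℝ) ≤ s ^ (a - 1) := Real.rpow_nonneg hs0.le _
    have hw : ‖ζ * ((s ^ a : ℝ) : ℂ)‖ ≤ r := by
      rw [norm_mul, Complex.norm_real, Real.norm_eq_abs, abs_of_nonneg (Real.rpow_nonneg hs0.le _),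
        hrdef]
      exact mul_le_mul_of_nonneg_left (Real.rpow_le_rpow hs0.le hs.2.le ha0.le) (norm_nonneg ζ)
    have hMLsummable : Summable (fun k : ℕ => ‖(ζ * ((s ^ a : ℝ) : ℂ)) ^ k /
        ((Real.Gamma (a * k + a) : ℝ) : ℂ)‖) := by
      have := summable_ml a a ha0 ha0 (norm_nonneg (ζ * ((s ^ a : ℝ) : ℂ)))
      convert this using 2 with k
      rw [norm_div, norm_pow, Complex.norm_real, Real.norm_eq_abs, abs_of_pos (hGa k)]
    have hMLbound : ‖mittagLeffler a a (ζ * ((s ^ a : ℝ) : ℂ))‖ ≤ C := by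
      refine (norm_tsum_le_tsum_norm hMLsummable).trans ?_
      rw [hC]
      apply Summable.tsum_le_tsum _ hMLsummable hCsum
      intro k
      rw [norm_div, norm_pow, Complex.norm_real, Real.norm_eq_abs, abs_of_pos (hGa k)]
      gcongr
    calc ‖F s‖ = (t - s) ^ (-a) * (s ^ (a - 1) * ‖mittagLeffler a a (ζ * ((s ^ a : ℝ) : ℂ))‖) := by
          rw [hF]
          simp only [norm_mul, Complex.norm_real, Real.norm_eq_abs, abs_of_nonneg hA,
            abs_of_nonneg hB]
      _ ≤ (t - s) ^ (-a) * (s ^ (a - 1) * C) := by gcongr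
      _ = C * ((t - s) ^ (-a) * s ^ (a - 1)) := by ring
  refine ⟨hFint, ?_⟩
  -- swap sum and integral
  have hswap := MeasureTheory.integral_tsum_of_summable_integral_norm
    (μ := volume.restrict (Ioo (0:ℝ) t)) hint hsumnorm
  have hFeq : (fun s : ℝ => ∑' k : ℕ, g k s) = F := by
    funext s; exact (hFg s).symm
  rw [hFeq] at hswap
  have hGne : ((Real.Gamma (1 - a) : ℝ) : ℂ) ≠ 0 := Complex.ofReal_ne_zero.mpr hG1a.ne'
  have : (∫ s in Ioo (0:ℝ) t, F s)
      = ((Real.Gamma (1 - a) : ℝ) : ℂ) * mittagLeffler a 1 (ζ * ((t ^ a : ℝ) : ℂ)) := by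
    rw [← hswap]
    simp_rw [hval]
    rw [tsum_mul_left, mittagLeffler]
  rw [hF] at this
  rw [this]
  field_simp
end

section
/- Let 0 < α < 1, 0 < β < 1, let λ > 0 and λ' > 0 be real numbers, and let T > 0. If E_{α,1}(−i λ t^α) = E_{β,1}(−i λ' t^β) for every t ∈ (0, T), then α = β and λ = λ'. -/
open Filter Topology

lemma half_le_Gamma {x : ℝ} (hx : 1 ≤ x) : (1/2 : ℝ) ≤ Real.Gamma x := by
  have hone : ∀ y : ℝ, 2 ≤ y → (1:ℝ) ≤ Real.Gamma y := by
    intro y hy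
    rcases eq_or_lt_of_le hy with h | h
    · rw [← h, Real.Gamma_two]
    · have := Real.Gamma_strictMonoOn_Ici (Set.mem_Ici.mpr le_rfl) (Set.mem_Ici.mpr hy) h
      rw [Real.Gamma_two] at this; linarith
  rcases le_or_gt 2 x with h | h
  · linarith [hone x h]
  · have hx0 : x ≠ 0 := by linarith
    have h1 : Real.Gamma (x+1) = x * Real.Gamma x := Real.Gamma_add_one hx0
    have h2 : (1:ℝ) ≤ x * Real.Gamma x := h1 ▸ hone (x+1) (by linarith)
    nlinarith [Real.Gamma_pos_of_pos (show (0:ℝ) < x by linarith)]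

lemma ml_bound (a : ℝ) (ha : 0 < a) (w : ℂ) (hw : ‖w‖ ≤ 1/2) :
    ‖mittagLeffler a 1 w - 1 - w / (Real.Gamma (a+1) : ℂ)‖ ≤ 4 * ‖w‖^2 := by
  set f : ℕ → ℂ := fun k => w ^ k / (Real.Gamma (a * k + 1) : ℂ) with hf
  have hge : ∀ k : ℕ, (1/2:ℝ) ≤ Real.Gamma (a * k + 1) := by
    intro k
    apply half_le_Gamma
    nlinarith [mul_nonneg ha.le (Nat.cast_nonneg (α := ℝ) k)]
  have hnorm : ∀ k : ℕ, ‖f k‖ ≤ 2 * ‖w‖ ^ k := by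
    intro k
    have hΓ := hge k
    have hΓ0 : (0:ℝ) < Real.Gamma (a*k+1) := by linarith
    rw [hf]
    simp only [norm_div, norm_pow, Complex.norm_real, Real.norm_eq_abs,
      abs_of_pos hΓ0]
    rw [div_le_iff₀ hΓ0]
    nlinarith [pow_nonneg (norm_nonneg w) k]
  have hwk : ∀ k : ℕ, ‖w‖ ^ k ≤ (1/2:ℝ) ^ k := fun k =>
    pow_le_pow_left₀ (norm_nonneg w) hw k
  have hgeo : Summable fun k : ℕ => (2:ℝ) * (1/2)^k :=
    (summable_geometric_of_lt_one (by norm_num) (by norm_num)).mul_left 2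
  have hsum : Summable f := by
    apply Summable.of_norm
    apply Summable.of_nonneg_of_le (fun k => norm_nonneg _) _ hgeo
    intro k
    calc ‖f k‖ ≤ 2 * ‖w‖ ^ k := hnorm k
    _ ≤ 2 * (1/2:ℝ)^k := by nlinarith [hwk k]
  have hsum1 : Summable fun k => f (k+1) := (summable_nat_add_iff 1).mpr hsum
  have hsum2 : Summable fun k => f (k+2) := (summable_nat_add_iff 2).mpr hsum
  have h0 : f 0 = 1 := by simp [hf, Real.Gamma_one]
  have h1 : f 1 = w / (Real.Gamma (a+1) : ℂ) := by simp [hf]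
  have key : mittagLeffler a 1 w - 1 - w / (Real.Gamma (a+1) : ℂ) = ∑' k, f (k+2) := by
    have e1 : mittagLeffler a 1 w = ∑' k, f k := rfl
    rw [e1, Summable.tsum_eq_zero_add hsum, Summable.tsum_eq_zero_add hsum1, h0, h1]
    have : (fun k => f (k + 1 + 1)) = fun k => f (k + 2) := by
      funext k; norm_num
    rw [this]; ring
  rw [key]
  have step : ∀ k : ℕ, ‖f (k+2)‖ ≤ (2 * ‖w‖^2) * (1/2:ℝ)^k := by
    intro k
    calc ‖f (k+2)‖ ≤ 2 * ‖w‖^(k+2) := hnorm _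
    _ = 2 * ‖w‖^2 * ‖w‖^k := by ring
    _ ≤ (2 * ‖w‖^2) * (1/2:ℝ)^k := by
        have := hwk k
        nlinarith [pow_nonneg (norm_nonneg w) k, sq_nonneg ‖w‖]
  have hns : Summable fun k => ‖f (k+2)‖ :=
    Summable.of_nonneg_of_le (fun _ => norm_nonneg _) step
      ((summable_geometric_of_lt_one (by norm_num) (by norm_num)).mul_left _)
  calc ‖∑' k, f (k+2)‖ ≤ ∑' k, ‖f (k+2)‖ := norm_tsum_le_tsum_norm hns
  _ ≤ ∑' k : ℕ, (2 * ‖w‖^2) * (1/2:ℝ)^k := by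
      apply Summable.tsum_le_tsum step hns
      exact (summable_geometric_of_lt_one (by norm_num) (by norm_num)).mul_left _
  _ = (2 * ‖w‖^2) * ∑' k : ℕ, (1/2:ℝ)^k := tsum_mul_left
  _ = 4 * ‖w‖^2 := by
      rw [tsum_geometric_of_lt_one (by norm_num) (by norm_num)]; norm_num; ring

lemma ml_tendsto (a : ℝ) (ha : 0 < a) (lam : ℝ) (hlam : 0 < lam) :
    Tendsto (fun t : ℝ =>
        (mittagLeffler a 1 (-Complex.I * lam * ((t ^ a : ℝ) : ℂ)) - 1) / ((t ^ a : ℝ) : ℂ))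
      (𝓝[>] (0:ℝ)) (𝓝 (-Complex.I * lam / (Real.Gamma (a+1) : ℂ))) := by
  have hta : Tendsto (fun t : ℝ => t ^ a) (𝓝[>] (0:ℝ)) (𝓝 0) := by
    have : ContinuousAt (fun t : ℝ => t ^ a) 0 :=
      Real.continuousAt_rpow_const 0 a (Or.inr ha.le)
    have := this.continuousWithinAt (s := Set.Ioi (0:ℝ))
    simpa [ContinuousWithinAt, Real.zero_rpow ha.ne'] using this
  rw [← tendsto_sub_nhds_zero_iff]
  have hg : Tendsto (fun t : ℝ => 4 * lam^2 * t ^ a) (𝓝[>] (0:ℝ)) (𝓝 0) := by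
    have : Tendsto (fun t : ℝ => 4 * lam^2 * t ^ a) (𝓝[>] (0:ℝ)) (𝓝 (4*lam^2*0)) :=
      (hta.const_mul _)
    simpa using this
  refine squeeze_zero_norm' ?_ hg
  · have hsmall : ∀ᶠ t in 𝓝[>] (0:ℝ), t ^ a < 1/(2*lam) :=
      hta.eventually_lt_const (by positivity)
    filter_upwards [hsmall, self_mem_nhdsWithin] with t hts (htpos : 0 < t)
    have hs : (0:ℝ) < t ^ a := Real.rpow_pos_of_pos htpos a
    have hΓ : (0:ℝ) < Real.Gamma (a+1) := Real.Gamma_pos_of_pos (by linarith)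
    set s : ℝ := t ^ a
    set w : ℂ := -Complex.I * lam * (s : ℂ) with hwdef
    have hwnorm : ‖w‖ = lam * s := by
      rw [hwdef]
      simp [norm_mul, Complex.norm_real, abs_of_pos hlam, abs_of_pos hs]
    have hwle : ‖w‖ ≤ 1/2 := by
      rw [hwnorm]
      rw [lt_div_iff₀ (by positivity)] at hts
      nlinarith
    have hb := ml_bound a ha w hwle
    have heq : (mittagLeffler a 1 w - 1) / (s:ℂ) - -Complex.I * lam / (Real.Gamma (a+1) : ℂ)
        = (mittagLeffler a 1 w - 1 - w / (Real.Gamma (a+1) : ℂ)) / (s:ℂ) := by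
      have hs0 : (s:ℂ) ≠ 0 := by exact_mod_cast hs.ne'
      have hΓ0 : ((Real.Gamma (a+1) : ℝ):ℂ) ≠ 0 := by exact_mod_cast hΓ.ne'
      field_simp [hwdef]
      ring
    rw [heq, norm_div]
    have hsn : ‖(s:ℂ)‖ = s := by simp [Complex.norm_real, abs_of_pos hs]
    rw [hsn, div_le_iff₀ hs]
    calc ‖mittagLeffler a 1 w - 1 - w / (Real.Gamma (a+1) : ℂ)‖ ≤ 4 * ‖w‖^2 := hb
    _ = 4 * lam^2 * s * s := by rw [hwnorm]; ring

lemma not_lt_aux (a b lam lam' T : ℝ) (ha0 : 0 < a) (hb0 : 0 < b)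
    (hlam : 0 < lam) (hlam' : 0 < lam') (hT : 0 < T)
    (h : ∀ t ∈ Set.Ioo (0 : ℝ) T,
      mittagLeffler a 1 (-Complex.I * lam * ((t ^ a : ℝ) : ℂ))
        = mittagLeffler b 1 (-Complex.I * lam' * ((t ^ b : ℝ) : ℂ)))
    (hab : a < b) : False := by
  have hFa := ml_tendsto a ha0 lam hlam
  have hFb := ml_tendsto b hb0 lam' hlam'
  have hIoo : Set.Ioo (0:ℝ) T ∈ 𝓝[>] (0:ℝ) :=
    Ioo_mem_nhdsGT_of_mem (by constructor <;> simp [hT])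
  have hev : ∀ᶠ t in 𝓝[>] (0:ℝ),
      (mittagLeffler a 1 (-Complex.I * lam * ((t ^ a : ℝ) : ℂ)) - 1) / ((t ^ a : ℝ) : ℂ)
      = ((mittagLeffler b 1 (-Complex.I * lam' * ((t ^ b : ℝ) : ℂ)) - 1) / ((t ^ b : ℝ) : ℂ))
        * ((t ^ (b - a) : ℝ) : ℂ) := by
    filter_upwards [hIoo] with t ht
    rw [h t ht]
    have htpos : 0 < t := ht.1
    have hsa : (0:ℝ) < t ^ a := Real.rpow_pos_of_pos htpos a
    have hsb : (0:ℝ) < t ^ b := Real.rpow_pos_of_pos htpos b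
    have hsplit : t ^ b = t ^ a * t ^ (b - a) := by
      rw [← Real.rpow_add htpos]; ring_nf
    have ha0' : ((t ^ a : ℝ):ℂ) ≠ 0 := by exact_mod_cast hsa.ne'
    have hb0' : ((t ^ b : ℝ):ℂ) ≠ 0 := by exact_mod_cast hsb.ne'
    rw [div_mul_eq_mul_div, div_eq_div_iff ha0' hb0']
    push_cast [hsplit]
    ring
  have htend0 : Tendsto (fun t : ℝ => ((t ^ (b - a) : ℝ) : ℂ)) (𝓝[>] (0:ℝ)) (𝓝 0) := by
    have hba : 0 < b - a := by linarith
    have : ContinuousAt (fun t : ℝ => t ^ (b - a)) 0 :=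
      Real.continuousAt_rpow_const 0 _ (Or.inr hba.le)
    have h2 := this.continuousWithinAt (s := Set.Ioi (0:ℝ))
    have h3 : Tendsto (fun t : ℝ => t ^ (b-a)) (𝓝[>] (0:ℝ)) (𝓝 0) := by
      simpa [ContinuousWithinAt, Real.zero_rpow hba.ne'] using h2
    have := (Complex.continuous_ofReal.tendsto 0).comp h3
    exact this
  have hR : Tendsto (fun t : ℝ =>
      ((mittagLeffler b 1 (-Complex.I * lam' * ((t ^ b : ℝ) : ℂ)) - 1) / ((t ^ b : ℝ) : ℂ))
        * ((t ^ (b - a) : ℝ) : ℂ)) (𝓝[>] (0:ℝ)) (𝓝 0) := by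
    have := hFb.mul htend0
    simpa using this
  have huniq : -Complex.I * lam / (Real.Gamma (a+1) : ℂ) = 0 :=
    tendsto_nhds_unique (hFa.congr' hev) hR
  have hΓ : (0:ℝ) < Real.Gamma (a+1) := Real.Gamma_pos_of_pos (by linarith)
  have hΓ0 : ((Real.Gamma (a+1) : ℝ):ℂ) ≠ 0 := by exact_mod_cast hΓ.ne'
  field_simp at huniq
  simp only [mul_zero, neg_eq_zero, mul_eq_zero, Complex.I_ne_zero, Complex.ofReal_eq_zero, false_or] at huniq
  rcases huniq with h' | h' <;> simp_all [hlam.ne']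

/-- Uniqueness of the fractional order: if `0 < α, β < 1`, `λ, λ' > 0`, `T > 0` and
`E_{α,1}(−i λ t^α) = E_{β,1}(−i λ' t^β)` for all `t ∈ (0, T)`, then `α = β` and `λ = λ'`. -/
theorem order_uniqueness (a b : ℝ) (ha0 : 0 < a) (ha1 : a < 1) (hb0 : 0 < b) (hb1 : b < 1)
    (lam lam' : ℝ) (hlam : 0 < lam) (hlam' : 0 < lam') (T : ℝ) (hT : 0 < T)
    (h : ∀ t ∈ Set.Ioo (0 : ℝ) T,
      mittagLeffler a 1 (-Complex.I * lam * ((t ^ a : ℝ) : ℂ))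
        = mittagLeffler b 1 (-Complex.I * lam' * ((t ^ b : ℝ) : ℂ))) :
    a = b ∧ lam = lam' := by
  have hab : a = b := by
    by_contra hne
    rcases lt_or_gt_of_ne hne with hlt | hlt
    · exact not_lt_aux a b lam lam' T ha0 hb0 hlam hlam' hT h hlt
    · exact not_lt_aux b a lam' lam T hb0 ha0 hlam' hlam hT
        (fun t ht => (h t ht).symm) hlt
  subst hab
  refine ⟨rfl, ?_⟩
  have h1 := ml_tendsto a ha0 lam hlam
  have h2 := ml_tendsto a ha0 lam' hlam'
  have hIoo : Set.Ioo (0:ℝ) T ∈ 𝓝[>] (0:ℝ) :=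
    Ioo_mem_nhdsGT_of_mem (by constructor <;> simp [hT])
  have hev : ∀ᶠ t in 𝓝[>] (0:ℝ),
      (mittagLeffler a 1 (-Complex.I * lam * ((t ^ a : ℝ) : ℂ)) - 1) / ((t ^ a : ℝ) : ℂ)
      = (mittagLeffler a 1 (-Complex.I * lam' * ((t ^ a : ℝ) : ℂ)) - 1) / ((t ^ a : ℝ) : ℂ) := by
    filter_upwards [hIoo] with t ht
    rw [h t ht]
  have huniq := tendsto_nhds_unique (h1.congr' hev) h2
  have hΓ : (0:ℝ) < Real.Gamma (a+1) := Real.Gamma_pos_of_pos (by linarith)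
  have hΓ0 : ((Real.Gamma (a+1) : ℝ):ℂ) ≠ 0 := by exact_mod_cast hΓ.ne'
  have hI : (-Complex.I : ℂ) ≠ 0 := neg_ne_zero.mpr Complex.I_ne_zero
  rw [div_eq_div_iff hΓ0 hΓ0] at huniq
  have : (lam : ℂ) = (lam' : ℂ) := by
    have := mul_right_cancel₀ hΓ0 huniq
    exact mul_left_cancel₀ hI (by linear_combination this)
  exact_mod_cast this
end
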